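/- arXiv:2209.12679 — 3 statements merged into one kernel-verified Lean document; each statement's English description precedes it below -/
import Mathlib

section
/- Let X, Y be separable Banach spaces, G ⊆ X open, and f : G → Y an arbitrary mapping. Then there exists a σ-upper porous set A ⊆ G such that for each x ∈ G \ A the following holds: if f is Lipschitz at x, f is Fréchet differentiable at x along a closed subspace Mˣ of X of finite codimension, and there is a set Sₓ ⊆ X whose linear span is dense in X such that the one-sided directional derivative f'₊(x,u) exists for all u ∈ Sₓ, then f is Fréchet differentiable at x. -/
set_option linter.unusedSectionVars false
set_option linter.unusedVariables false

open Metric Set Topology Filter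

variable {X Y : Type*} [NormedAddCommGroup X] [NormedSpace ℝ X] [CompleteSpace X]
  [NormedAddCommGroup Y] [NormedSpace ℝ Y] [CompleteSpace Y]

/-- `f` is Fréchet differentiable at `a` along the subspace `V`. -/
def FrechetDiffAlong (f : X → Y) (V : Submodule ℝ X) (a : X) : Prop :=
  DifferentiableAt ℝ (fun v : V => f (a + (v : X))) (0 : V)

/-- `f` is Lipschitz at `x`. -/
def LipschitzAtPt (f : X → Y) (x : X) : Prop :=
  ∃ L : ℝ, ∀ᶠ y in nhds x, ‖f y - f x‖ ≤ L * ‖y - x‖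

/-- The one-sided directional derivative `f'₊(x,u)` exists. -/
def HasOneSidedDirDeriv (f : X → Y) (x u : X) : Prop :=
  ∃ d : Y, Tendsto (fun t : ℝ => t⁻¹ • (f (x + t • u) - f x)) (nhdsWithin 0 (Ioi 0)) (nhds d)

/-- `A` is (upper) porous at `x`. -/
def PorousAt (A : Set X) (x : X) : Prop :=
  ∃ c > (0 : ℝ), ∀ δ > (0 : ℝ), ∃ t, t ∈ ball x δ ∧ t ≠ x ∧ ball t (c * dist t x) ∩ A = ∅

/-- `A` is (upper) porous: porous at each of its points. -/
def Porous (A : Set X) : Prop := ∀ x ∈ A, PorousAt A x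

/-- `A` is σ-(upper) porous: a countable union of porous sets. -/
def SigmaPorous (A : Set X) : Prop :=
  ∃ u : ℕ → Set X, (∀ n, Porous (u n)) ∧ A = ⋃ n, u n

/-- Relaxed (comparable-scale) strongness of a directional derivative. -/
def RelStrong (f : X → Y) (x v : X) (d : Y) : Prop :=
  ∀ ε > (0:ℝ), ∃ δ > (0:ℝ), ∀ z : X, ∀ t : ℝ, ‖z - x‖ < δ → 0 < t → t < δ →
    ‖f (z + t • v) - f z - t • d‖ ≤ ε * (t + ‖z - x‖)

noncomputable def thetaC (K : ℕ) (ε : ℝ) : ℝ := ε / (16 * (K + 1))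

def piece (f : X → Y) (G : Set X) (v₁ : X) (d : Y) (K : ℕ) (r ε : ℝ) : Set X :=
  {x | x ∈ G ∧ 0 < r ∧ 0 < ε ∧ ∃ v : X, ‖v - v₁‖ ≤ thetaC K ε ∧
    (∀ y : X, ‖y - x‖ < r → ‖f y - f x‖ ≤ K * ‖y - x‖) ∧
    (∀ t : ℝ, 0 < t → t < r → ‖f (x + t • v) - f x - t • d‖ ≤ thetaC K ε * t) ∧
    (∀ δ > (0:ℝ), ∃ z : X, ∃ t : ℝ, ‖z - x‖ < δ ∧ 0 < t ∧ t < δ ∧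
      ε * (t + ‖z - x‖) < ‖f (z + t • v) - f z - t • d‖)}

set_option maxHeartbeats 1000000 in
lemma porous_piece (f : X → Y) (G : Set X) (v₁ : X) (d : Y) (K : ℕ) (r ε : ℝ) :
    Porous (piece f G v₁ d K r ε) := by
  intro x hx
  have hxP := hx
  obtain ⟨hxG, hr, hε, v, hv1, hLx, hGx, hB⟩ := hx
  obtain ⟨θ, hθdef⟩ : ∃ θ : ℝ, θ = thetaC K ε := ⟨_, rfl⟩
  rw [← hθdef] at hv1 hGx
  have hK0 : (0:ℝ) ≤ K := Nat.cast_nonneg K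
  have hθ : 0 < θ := by rw [hθdef]; exact div_pos hε (by positivity)
  have hθval : θ * (16 * (K + 1)) = ε := by
    rw [hθdef]; unfold thetaC; field_simp
  obtain ⟨Bc, hBcdef⟩ : ∃ y : ℝ, y = 1 + ‖v₁‖ + θ := ⟨_, rfl⟩
  have hBc1 : 1 ≤ Bc := by have := norm_nonneg v₁; rw [hBcdef]; linarith
  have hBc0 : 0 < Bc := lt_of_lt_of_le one_pos hBc1
  have hvnorm : ‖v‖ ≤ ‖v₁‖ + θ := by
    calc ‖v‖ = ‖(v - v₁) + v₁‖ := by congr 1; abel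
    _ ≤ ‖v - v₁‖ + ‖v₁‖ := norm_add_le _ _
    _ ≤ ‖v₁‖ + θ := by linarith
  refine ⟨θ / Bc, div_pos hθ hBc0, fun δ hδ => ?_⟩
  obtain ⟨D, hDdef⟩ : ∃ y : ℝ, y = 8 * Bc * (1 + θ) := ⟨_, rfl⟩
  have hD0 : 0 < D := by rw [hDdef]; positivity
  have hBcθ : 0 < Bc * θ := mul_pos hBc0 hθ
  have hBcθ' : 0 ≤ (Bc - 1) * θ := mul_nonneg (by linarith) (le_of_lt hθ)
  have h8D : 8 ≤ D := by rw [hDdef]; ring_nf; ring_nf at hBcθ hBcθ'; linarith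
  have h8θD : 8 * θ ≤ D := by rw [hDdef]; ring_nf; ring_nf at hBcθ hBcθ'; linarith
  have h8BcD : 8 * Bc ≤ D := by rw [hDdef]; ring_nf; ring_nf at hBcθ hBcθ'; linarith
  obtain ⟨δ₀, hδ₀def⟩ : ∃ y : ℝ, y = min δ r / D := ⟨_, rfl⟩
  have hminpos : 0 < min δ r := lt_min hδ hr
  have hδ₀ : 0 < δ₀ := by rw [hδ₀def]; exact div_pos hminpos hD0
  have hδ₀D : δ₀ * D = min δ r := by rw [hδ₀def]; exact div_mul_cancel₀ _ (ne_of_gt hD0)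
  have hminδ : min δ r ≤ δ := min_le_left _ _
  have hminr : min δ r ≤ r := min_le_right _ _
  obtain ⟨z, t, hzx, ht0, htδ, hbad⟩ := hB δ₀ hδ₀
  obtain ⟨ρ, hρdef⟩ : ∃ y : ℝ, y = ‖z - x‖ := ⟨_, rfl⟩
  rw [← hρdef] at hzx hbad
  have hρ0 : 0 ≤ ρ := hρdef ▸ norm_nonneg _
  obtain ⟨s, hsdef⟩ : ∃ y : ℝ, y = t + ρ := ⟨_, rfl⟩
  rw [← hsdef] at hbad
  have hs0 : 0 < s := by rw [hsdef]; linarith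
  have hts : t ≤ s := by rw [hsdef]; linarith
  have hρs : ρ ≤ s := by rw [hsdef]; linarith
  have hs2 : s < 2 * δ₀ := by rw [hsdef]; linarith
  -- size facts
  have hδ₀δ : 8 * δ₀ ≤ δ := by linarith [mul_le_mul_of_nonneg_left h8D (le_of_lt hδ₀)]
  have hδ₀r : δ₀ ≤ r := by linarith [mul_le_mul_of_nonneg_left h8D (le_of_lt hδ₀)]
  have hθs_r : θ * s < r / 4 := by
    have h1 : 8 * θ * δ₀ ≤ D * δ₀ := mul_le_mul_of_nonneg_right h8θD (le_of_lt hδ₀)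
    have h2 : θ * s < θ * (2 * δ₀) := mul_lt_mul_of_pos_left hs2 hθ
    linarith
  have hsBcδ : Bc * s < δ := by
    have h1 : 8 * Bc * δ₀ ≤ D * δ₀ := mul_le_mul_of_nonneg_right h8BcD (le_of_lt hδ₀)
    have h2 : Bc * s < Bc * (2 * δ₀) := mul_lt_mul_of_pos_left hs2 hBc0
    linarith
  have hθspos : 0 < θ * s := mul_pos hθ hs0
  -- the two candidate hole centers
  have hcz : ‖z - x‖ < δ := by rw [← hρdef]; linarith
  have hczv : ‖z + t • v - x‖ ≤ ρ + t * (‖v₁‖ + θ) := by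
    calc ‖z + t • v - x‖ = ‖(z - x) + t • v‖ := by congr 1; abel
    _ ≤ ‖z - x‖ + ‖t • v‖ := norm_add_le _ _
    _ ≤ ρ + t * (‖v₁‖ + θ) := by
        rw [norm_smul, Real.norm_eq_abs, abs_of_pos ht0, ← hρdef]
        have := mul_le_mul_of_nonneg_left hvnorm (le_of_lt ht0)
        linarith
  have hczv2 : ‖z + t • v - x‖ ≤ Bc * s := by
    have : ρ + t * (‖v₁‖ + θ) ≤ Bc * s := by
      rw [hBcdef]
      have hp : t * (‖v₁‖ + θ) ≤ s * (‖v₁‖ + θ) :=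
        mul_le_mul_of_nonneg_right hts (by positivity)
      ring_nf; ring_nf at hp; linarith
    linarith [hczv]
  have hczvδ : ‖z + t • v - x‖ < δ := lt_of_le_of_lt hczv2 hsBcδ
  -- dichotomy
  have key : (ball z (θ*s) ∩ piece f G v₁ d K r ε = ∅) ∨
      (ball (z + t • v) (θ*s) ∩ piece f G v₁ d K r ε = ∅) := by
    by_contra hcon
    push_neg at hcon
    obtain ⟨h1, h2⟩ := hcon
    obtain ⟨y₁, hy₁b, hy₁P⟩ := h1
    obtain ⟨y₂, hy₂b, hy₂P⟩ := h2
    obtain ⟨_, _, _, w₁, hw₁, hL₁, hG₁, -⟩ := hy₁P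
    obtain ⟨_, _, _, w₂, -, hL₂, -, -⟩ := hy₂P
    rw [← hθdef] at hw₁
    rw [mem_ball, dist_eq_norm] at hy₁b hy₂b
    -- e1
    have d1 : ‖(z + t • v) - y₂‖ < θ * s := by rw [norm_sub_rev]; exact hy₂b
    have e1 : ‖f (z + t • v) - f y₂‖ ≤ K * (θ * s) := by
      have := hL₂ (z + t • v) (lt_trans d1 (by linarith))
      calc ‖f (z + t • v) - f y₂‖ ≤ (K:ℝ) * ‖(z + t • v) - y₂‖ := this
      _ ≤ K * (θ * s) := mul_le_mul_of_nonneg_left (le_of_lt d1) (by positivity)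
    -- e2
    have hw₁v : ‖w₁ - v‖ ≤ 2 * θ := by
      calc ‖w₁ - v‖ = ‖(w₁ - v₁) - (v - v₁)‖ := by congr 1; abel
      _ ≤ ‖w₁ - v₁‖ + ‖v - v₁‖ := norm_sub_le _ _
      _ ≤ 2 * θ := by linarith
    have d2 : ‖(y₁ + t • w₁) - y₂‖ ≤ 4 * (θ * s) := by
      have expand : (y₁ + t • w₁) - y₂ =
          (y₁ - z) + t • (w₁ - v) + ((z + t • v) - y₂) := by
        rw [smul_sub]; abel
      rw [expand]
      have htw : ‖t • (w₁ - v)‖ ≤ t * (2 * θ) := by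
        rw [norm_smul, Real.norm_eq_abs, abs_of_pos ht0]
        exact mul_le_mul_of_nonneg_left hw₁v (le_of_lt ht0)
      have h1n : ‖y₁ - z‖ < θ * s := hy₁b
      have ht2θ : t * (2 * θ) ≤ s * (2 * θ) :=
        mul_le_mul_of_nonneg_right hts (by positivity)
      calc ‖(y₁ - z) + t • (w₁ - v) + ((z + t • v) - y₂)‖
          ≤ ‖(y₁ - z) + t • (w₁ - v)‖ + ‖(z + t • v) - y₂‖ := norm_add_le _ _
      _ ≤ ‖y₁ - z‖ + ‖t • (w₁ - v)‖ + ‖(z + t • v) - y₂‖ := by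
          have := norm_add_le (y₁ - z) (t • (w₁ - v)); linarith
      _ ≤ 4 * (θ * s) := by
          have : s * (2 * θ) ≤ 2 * (θ * s) := by ring_nf; linarith
          linarith
    have e2 : ‖f (y₁ + t • w₁) - f y₂‖ ≤ K * (4 * (θ * s)) := by
      have hd2r : ‖(y₁ + t • w₁) - y₂‖ < r := lt_of_le_of_lt d2 (by linarith)
      have := hL₂ (y₁ + t • w₁) hd2r
      calc ‖f (y₁ + t • w₁) - f y₂‖ ≤ (K:ℝ) * ‖(y₁ + t • w₁) - y₂‖ := this
      _ ≤ K * (4 * (θ * s)) := mul_le_mul_of_nonneg_left d2 (by positivity)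
    -- e3
    have e3 : ‖f (y₁ + t • w₁) - f y₁ - t • d‖ ≤ θ * t := by
      rw [hθdef]; exact hG₁ t ht0 (lt_of_lt_of_le htδ hδ₀r)
    -- e4
    have d4 : ‖z - y₁‖ < θ * s := by rw [norm_sub_rev]; exact hy₁b
    have e4 : ‖f z - f y₁‖ ≤ K * (θ * s) := by
      have := hL₁ z (lt_trans d4 (by linarith))
      calc ‖f z - f y₁‖ ≤ (K:ℝ) * ‖z - y₁‖ := this
      _ ≤ K * (θ * s) := mul_le_mul_of_nonneg_left (le_of_lt d4) (by positivity)
    -- triangle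
    have tri : ‖f (z + t • v) - f z - t • d‖ ≤ (6 * K + 1) * (θ * s) := by
      have expand : f (z + t • v) - f z - t • d =
          (f (z + t • v) - f y₂) + (f y₂ - f (y₁ + t • w₁)) +
          (f (y₁ + t • w₁) - f y₁ - t • d) + (f y₁ - f z) := by abel
      rw [expand]
      have n2 : ‖f y₂ - f (y₁ + t • w₁)‖ ≤ K * (4 * (θ * s)) := by
        rw [norm_sub_rev]; exact e2
      have n4 : ‖f y₁ - f z‖ ≤ K * (θ * s) := by rw [norm_sub_rev]; exact e4
      have htts : θ * t ≤ θ * s := mul_le_mul_of_nonneg_left hts (le_of_lt hθ)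
      calc ‖_ + _ + _ + _‖ ≤ ‖(f (z + t • v) - f y₂) + (f y₂ - f (y₁ + t • w₁)) +
            (f (y₁ + t • w₁) - f y₁ - t • d)‖ + ‖f y₁ - f z‖ := norm_add_le _ _
      _ ≤ ‖(f (z + t • v) - f y₂) + (f y₂ - f (y₁ + t • w₁))‖ +
            ‖f (y₁ + t • w₁) - f y₁ - t • d‖ + ‖f y₁ - f z‖ := by
          have := norm_add_le ((f (z + t • v) - f y₂) + (f y₂ - f (y₁ + t • w₁)))
            (f (y₁ + t • w₁) - f y₁ - t • d); linarith
      _ ≤ ‖f (z + t • v) - f y₂‖ + ‖f y₂ - f (y₁ + t • w₁)‖ +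
            ‖f (y₁ + t • w₁) - f y₁ - t • d‖ + ‖f y₁ - f z‖ := by
          have := norm_add_le (f (z + t • v) - f y₂) (f y₂ - f (y₁ + t • w₁)); linarith
      _ ≤ (6 * K + 1) * (θ * s) := by
          have hg : (6 * (K:ℝ) + 1) * (θ * s) =
            (K:ℝ) * (θ * s) + (K:ℝ) * (4 * (θ * s)) + θ * s + (K:ℝ) * (θ * s) := by ring
          rw [hg]; linarith
    have hfin : (6 * K + 1) * (θ * s) ≤ ε * s := by
      have hεs : θ * (16 * ((K:ℝ) + 1)) * s = ε * s := by rw [hθval]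
      have hp1 : 0 ≤ (K:ℝ) * (θ * s) :=
        mul_nonneg hK0 (mul_nonneg (le_of_lt hθ) (le_of_lt hs0))
      have hp2 : 0 ≤ θ * s := mul_nonneg (le_of_lt hθ) (le_of_lt hs0)
      ring_nf; ring_nf at hεs hp1 hp2; linarith
    linarith [tri, hfin, hbad]
  -- produce the porosity witness
  have hsub : ∀ w : X, w ≠ x → ‖w - x‖ < δ → (θ / Bc) * dist w x ≤ θ * s →
      ball w (θ*s) ∩ piece f G v₁ d K r ε = ∅ →
      ∃ t', t' ∈ ball x δ ∧ t' ≠ x ∧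
        ball t' ((θ / Bc) * dist t' x) ∩ piece f G v₁ d K r ε = ∅ := by
    intro w hwx hwδ hcd hempty
    refine ⟨w, ?_, hwx, ?_⟩
    · rw [mem_ball, dist_eq_norm]; exact hwδ
    · apply eq_empty_of_subset_empty
      rw [← hempty]
      exact inter_subset_inter_left _ (ball_subset_ball hcd)
  rcases key with hk | hk
  · have hzne : z ≠ x := by
      intro h
      have hxball : x ∈ ball z (θ*s) := by rw [h]; exact mem_ball_self hθspos
      exact absurd hk (nonempty_iff_ne_empty.1 ⟨x, hxball, hxP⟩)
    refine hsub z hzne hcz ?_ hk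
    rw [dist_eq_norm, ← hρdef]
    have hdb : θ / Bc ≤ θ := by
      rw [div_le_iff₀ hBc0]
      have := mul_le_mul_of_nonneg_left hBc1 (le_of_lt hθ)
      linarith
    calc (θ / Bc) * ρ ≤ (θ / Bc) * s := by
          apply mul_le_mul_of_nonneg_left hρs (by positivity)
    _ ≤ θ * s := mul_le_mul_of_nonneg_right hdb (le_of_lt hs0)
  · have hzne : z + t • v ≠ x := by
      intro h
      have hxball : x ∈ ball (z + t • v) (θ*s) := by rw [h]; exact mem_ball_self hθspos
      exact absurd hk (nonempty_iff_ne_empty.1 ⟨x, hxball, hxP⟩)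
    refine hsub _ hzne hczvδ ?_ hk
    rw [dist_eq_norm]
    calc (θ / Bc) * ‖z + t • v - x‖ ≤ (θ / Bc) * (Bc * s) := by
          apply mul_le_mul_of_nonneg_left hczv2 (by positivity)
    _ = θ * s := by field_simp

lemma mem_piece_of_not_relStrong {f : X → Y} {G : Set X} {x : X} (hxG : x ∈ G)
    (hLip : LipschitzAtPt f x) {v : X} {d : Y}
    (hder : Tendsto (fun t : ℝ => t⁻¹ • (f (x + t • v) - f x)) (nhdsWithin 0 (Ioi 0)) (nhds d))
    (hns : ¬ RelStrong f x v d)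
    (xs : ℕ → X) (hxs : DenseRange xs) (ys : ℕ → Y) (hys : DenseRange ys) :
    ∃ (i j K : ℕ) (q e : ℚ), x ∈ piece f G (xs i) (ys j) K (q:ℝ) (e:ℝ) := by
  obtain ⟨L, hL⟩ := hLip
  rw [Metric.eventually_nhds_iff] at hL
  obtain ⟨r₁, hr₁, hL1⟩ := hL
  set K : ℕ := ⌈L⌉₊ with hKdef
  have hLK : L ≤ K := Nat.le_ceil L
  unfold RelStrong at hns
  push_neg at hns
  obtain ⟨ε₂, hε₂, hbad⟩ := hns
  obtain ⟨e, he0, heε⟩ := exists_rat_btwn (half_pos hε₂)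
  have he0' : (0:ℝ) < e := he0
  set θ : ℝ := thetaC K e with hθdef
  have hθ : 0 < θ := div_pos he0' (by positivity)
  have hmin2 : 0 < min (θ/2) (ε₂/2) := lt_min (by linarith) (by linarith)
  obtain ⟨j, hj⟩ := hys.exists_dist_lt d hmin2
  obtain ⟨i, hi⟩ := hxs.exists_dist_lt v hθ
  have hdd : ‖d - ys j‖ < min (θ/2) (ε₂/2) := by rw [← dist_eq_norm]; exact hj
  have hddθ : ‖d - ys j‖ ≤ θ/2 := le_of_lt (lt_of_lt_of_le hdd (min_le_left _ _))
  have hddε : ‖d - ys j‖ ≤ ε₂/2 := le_of_lt (lt_of_lt_of_le hdd (min_le_right _ _))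
  rw [Metric.tendsto_nhdsWithin_nhds] at hder
  obtain ⟨r₂, hr₂, hquot⟩ := hder (θ/2) (by linarith)
  obtain ⟨q, hq0, hqm⟩ := exists_rat_btwn (lt_min hr₁ hr₂)
  have hq0' : (0:ℝ) < q := hq0
  have hqr₁ : (q:ℝ) < r₁ := lt_of_lt_of_le hqm (min_le_left _ _)
  have hqr₂ : (q:ℝ) < r₂ := lt_of_lt_of_le hqm (min_le_right _ _)
  refine ⟨i, j, K, q, e, hxG, hq0', he0', v, ?_, ?_, ?_, ?_⟩
  · rw [← hθdef]
    have : ‖v - xs i‖ < θ := by rw [← dist_eq_norm]; exact hi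
    exact le_of_lt this
  · intro y hy
    have h1 : dist y x < r₁ := by rw [dist_eq_norm]; exact lt_trans hy hqr₁
    refine le_trans (hL1 h1) ?_
    exact mul_le_mul_of_nonneg_right hLK (norm_nonneg _)
  · intro t ht0 htq
    rw [← hθdef]
    have htr₂ : dist t 0 < r₂ := by
      rw [Real.dist_eq, sub_zero, abs_of_pos ht0]; exact lt_trans htq hqr₂
    have hq := hquot (mem_Ioi.2 ht0) htr₂
    rw [dist_eq_norm] at hq
    have hid : f (x + t • v) - f x - t • (ys j) =
        t • (t⁻¹ • (f (x + t • v) - f x) - d) + t • (d - ys j) := by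
      have hA : t • (t⁻¹ • (f (x + t • v) - f x)) = f (x + t • v) - f x :=
        smul_inv_smul₀ (ne_of_gt ht0) _
      rw [smul_sub t (t⁻¹ • (f (x + t • v) - f x)) d, hA, smul_sub t d (ys j)]
      abel
    rw [hid]
    calc ‖t • (t⁻¹ • (f (x + t • v) - f x) - d) + t • (d - ys j)‖
        ≤ ‖t • (t⁻¹ • (f (x + t • v) - f x) - d)‖ + ‖t • (d - ys j)‖ := norm_add_le _ _
    _ ≤ t * (θ/2) + t * (θ/2) := by
        rw [norm_smul, norm_smul, Real.norm_eq_abs, abs_of_pos ht0]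
        have h1 := mul_le_mul_of_nonneg_left (le_of_lt hq) (le_of_lt ht0)
        have h2 := mul_le_mul_of_nonneg_left hddθ (le_of_lt ht0)
        linarith
    _ = θ * t := by ring
  · intro δ hδ
    obtain ⟨z, t, hz, ht0, htδ, hb⟩ := hbad δ hδ
    refine ⟨z, t, hz, ht0, htδ, ?_⟩
    have hid : f (z + t • v) - f z - t • (ys j) =
        (f (z + t • v) - f z - t • d) + t • (d - ys j) := by
      rw [smul_sub]; abel
    have hlow : ‖f (z + t • v) - f z - t • d‖ - ‖t • (d - ys j)‖
        ≤ ‖f (z + t • v) - f z - t • (ys j)‖ := by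
      rw [hid]
      have := norm_add_le (f (z + t • v) - f z - t • d) (- (t • (d - ys j)))
      simp only [norm_neg] at this
      have h2 : f (z + t • v) - f z - t • d =
          (f (z + t • v) - f z - t • d + t • (d - ys j)) + -(t • (d - ys j)) := by abel
      calc ‖f (z + t • v) - f z - t • d‖ - ‖t • (d - ys j)‖
          ≤ (‖f (z + t • v) - f z - t • d + t • (d - ys j)‖ + ‖t • (d - ys j)‖)
            - ‖t • (d - ys j)‖ := by
            rw [h2] at this ⊢
            have h3 := norm_add_le (f (z + t • v) - f z - t • d + t • (d - ys j))
              (-(t • (d - ys j)))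
            simp only [norm_neg] at h3
            rw [← h2] at h3 ⊢
            linarith [h3]
      _ = ‖f (z + t • v) - f z - t • d + t • (d - ys j)‖ := by ring
    have hsm : ‖t • (d - ys j)‖ ≤ t * (ε₂/2) := by
      rw [norm_smul, Real.norm_eq_abs, abs_of_pos ht0]
      exact mul_le_mul_of_nonneg_left hddε (le_of_lt ht0)
    have hρ0 : (0:ℝ) ≤ ‖z - x‖ := norm_nonneg _
    have heb : (e:ℝ) * (t + ‖z - x‖) ≤ (ε₂/2) * (t + ‖z - x‖) :=
      mul_le_mul_of_nonneg_right (le_of_lt heε) (by linarith)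
    have hfb : (ε₂/2) * (t + ‖z - x‖) ≤ ε₂ * (t + ‖z - x‖) - t * (ε₂/2) := by
      ring_nf
      have : t * ε₂ ≤ t * ε₂ + ‖z - x‖ * ε₂ := by
        have := mul_nonneg hρ0 (le_of_lt hε₂); linarith
      linarith [mul_nonneg hρ0 (le_of_lt hε₂)]
    linarith [hlow, hsm, hb, heb, hfb]

lemma exists_pos_le_all (n : ℕ) (g : ℕ → ℝ) (hg : ∀ j, j < n → 0 < g j) :
    ∃ δ > (0:ℝ), ∀ j, j < n → δ ≤ g j := by
  induction n with
  | zero => exact ⟨1, one_pos, fun j hj => absurd hj (Nat.not_lt_zero j)⟩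
  | succ m ih =>
    obtain ⟨δ, hδ, hall⟩ := ih (fun j hj => hg j (Nat.lt_succ_of_lt hj))
    refine ⟨min δ (g m), lt_min hδ (hg m m.lt_succ_self), fun j hj => ?_⟩
    rcases Nat.lt_succ_iff_lt_or_eq.1 hj with h | h
    · exact le_trans (min_le_left _ _) (hall j h)
    · subst h; exact min_le_right _ _

lemma relStrong_step {f : X → Y} {x sv : X} {d : Y} {ε δ : ℝ} (hε : 0 ≤ ε)
    (hst : ∀ z : X, ∀ t : ℝ, ‖z - x‖ < δ → 0 < t → t < δ →
      ‖f (z + t • sv) - f z - t • d‖ ≤ ε * (t + ‖z - x‖))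
    (w : X) (a : ℝ) (h1 : ‖w - x‖ < δ) (h2 : ‖w + a • sv - x‖ < δ) (h3 : |a| < δ) :
    ‖f (w + a • sv) - f w - a • d‖ ≤ ε * (|a| + ‖w - x‖ + ‖w + a • sv - x‖) := by
  have hn1 : 0 ≤ ‖w - x‖ := norm_nonneg _
  have hn2 : 0 ≤ ‖w + a • sv - x‖ := norm_nonneg _
  rcases lt_trichotomy a 0 with ha | ha | ha
  · have ht0 : 0 < -a := by linarith
    have habs : |a| = -a := abs_of_neg ha
    have hkey := hst (w + a • sv) (-a) h2 ht0 (by rwa [habs] at h3)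
    have hz : (w + a • sv) + (-a) • sv = w := by rw [neg_smul]; abel
    rw [hz] at hkey
    have hnorm : ‖f (w + a • sv) - f w - a • d‖ = ‖f w - f (w + a • sv) - (-a) • d‖ := by
      rw [← norm_neg]; congr 1; rw [neg_smul]; abel
    rw [hnorm]
    refine le_trans hkey ?_
    have : ε * (-a + ‖w + a • sv - x‖) ≤ ε * (|a| + ‖w - x‖ + ‖w + a • sv - x‖) := by
      apply mul_le_mul_of_nonneg_left _ hε
      rw [habs]; linarith
    exact this
  · subst ha
    simp only [zero_smul, add_zero, sub_self, zero_sub, norm_neg, norm_zero]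
    have : (0:ℝ) ≤ ε * (|(0:ℝ)| + ‖w - x‖ + ‖w + (0:ℝ) • sv - x‖) := by positivity
    simpa using this
  · have habs : |a| = a := abs_of_pos ha
    have hkey := hst w a h1 ha (by rwa [habs] at h3)
    refine le_trans hkey ?_
    apply mul_le_mul_of_nonneg_left _ hε
    rw [habs]; linarith

lemma relStrong_zero (f : X → Y) (x : X) : RelStrong f x 0 0 := by
  intro ε hε
  refine ⟨1, one_pos, fun z t hz ht ht' => ?_⟩
  simp only [smul_zero, add_zero, sub_self, sub_zero, norm_zero]
  positivity

set_option maxHeartbeats 1000000 in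
set_option synthInstance.maxHeartbeats 400000 in
lemma diff_of_relStrong {f : X → Y} {x : X} (M : Submodule ℝ X)
    (hMc : IsClosed (M : Set X)) (hfd : FiniteDimensional ℝ (X ⧸ M))
    (hdiff : DifferentiableAt ℝ (fun v : M => f (x + (v : X))) (0 : M))
    (S : Set X) (hS : Dense ((Submodule.span ℝ S : Submodule ℝ X) : Set X))
    (hder : ∀ u ∈ S, ∃ d : Y, RelStrong f x u d) :
    DifferentiableAt ℝ f x := by
  haveI : IsClosed (M : Set X) := hMc
  haveI := hfd
  -- continuous projection onto the quotient
  let πL : X →L[ℝ] (X ⧸ M) := LinearMap.mkContinuous M.mkQ 1 (fun m => by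
    rw [one_mul]
    exact Submodule.Quotient.norm_mk_le _ m)
  have hπL : ∀ h : X, πL h = M.mkQ h := fun h => rfl
  -- the image of the span of S is everything
  have hcomap : Submodule.comap M.mkQ (Submodule.map M.mkQ (Submodule.span ℝ S)) = ⊤ := by
    set W := Submodule.map M.mkQ (Submodule.span ℝ S) with hW
    have hWclosed : IsClosed (W : Set (X ⧸ M)) := Submodule.closed_of_finiteDimensional W
    have hpre : IsClosed ((Submodule.comap M.mkQ W : Submodule ℝ X) : Set X) := by
      have heq : ((Submodule.comap M.mkQ W : Submodule ℝ X) : Set X)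
          = πL ⁻¹' (W : Set (X ⧸ M)) := rfl
      rw [heq]
      exact hWclosed.preimage πL.continuous
    have hsub : ((Submodule.span ℝ S : Submodule ℝ X) : Set X)
        ⊆ ((Submodule.comap M.mkQ W : Submodule ℝ X) : Set X) := Submodule.le_comap_map _ _
    rw [Submodule.eq_top_iff']
    intro y
    have hy : y ∈ closure ((Submodule.span ℝ S : Submodule ℝ X) : Set X) := by
      rw [hS.closure_eq]; trivial
    exact hpre.closure_subset_iff.2 hsub hy
  have hmap : Submodule.map M.mkQ (Submodule.span ℝ S) = ⊤ := by
    have h1 := Submodule.map_comap_eq M.mkQ (Submodule.map M.mkQ (Submodule.span ℝ S))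
    rw [hcomap, Submodule.map_top, Submodule.range_mkQ, top_inf_eq] at h1
    exact h1.symm
  have hspan : Submodule.span ℝ (M.mkQ '' S) = ⊤ := by
    rw [← Submodule.map_span]; exact hmap
  -- extract a finite basis of the quotient from the image of S
  obtain ⟨b, hbsub, hbspan, hbind⟩ := exists_linearIndependent ℝ (M.mkQ '' S)
  rw [hspan] at hbspan
  have hbfin : b.Finite := hbind.setFinite
  haveI : Fintype b := hbfin.fintype
  let B : Module.Basis b ℝ (X ⧸ M) := Module.Basis.mk hbind (by rw [Subtype.range_coe, hbspan])
  set n := Fintype.card b with hn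
  let eb : Fin n ≃ b := (Fintype.equivFin b).symm
  let Bf : Module.Basis (Fin n) ℝ (X ⧸ M) := B.reindex eb.symm
  have hBfval : ∀ i : Fin n, Bf i = ((eb i : b) : X ⧸ M) := by
    intro i
    simp only [Bf, Module.Basis.reindex_apply, Equiv.symm_symm, B, Module.Basis.mk_apply]
  -- lift the basis vectors to elements of S
  have hlift : ∀ i : Fin n, ∃ u : X, u ∈ S ∧ M.mkQ u = Bf i := by
    intro i
    have hmem : Bf i ∈ M.mkQ '' S := by rw [hBfval i]; exact hbsub (eb i).2
    obtain ⟨u, hu, hu2⟩ := hmem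
    exact ⟨u, hu, hu2⟩
  choose sv hsvS hsvQ using hlift
  choose dv hdv using fun i : Fin n => hder (sv i) (hsvS i)
  -- coordinates as continuous linear functionals
  let ℓ : Fin n → (X →L[ℝ] ℝ) :=
    fun i => (LinearMap.toContinuousLinearMap (Bf.coord i)).comp πL
  -- the ℕ-indexed versions
  let aL : ℕ → (X →L[ℝ] ℝ) := fun j => if hj : j < n then ℓ ⟨j, hj⟩ else 0
  let sN : ℕ → X := fun j => if hj : j < n then sv ⟨j, hj⟩ else 0
  let dN : ℕ → Y := fun j => if hj : j < n then dv ⟨j, hj⟩ else 0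
  have hRS : ∀ j : ℕ, RelStrong f x (sN j) (dN j) := by
    intro j
    by_cases hj : j < n
    · simp only [sN, dN, dif_pos hj]; exact hdv ⟨j, hj⟩
    · simp only [sN, dN, dif_neg hj]; exact relStrong_zero f x
  -- the projection onto M along the lifted basis
  let R : X →L[ℝ] X := ContinuousLinearMap.id ℝ X
    - ∑ j ∈ Finset.range n, (aL j).smulRight (sN j)
  have hRapp : ∀ h : X, R h = h - ∑ j ∈ Finset.range n, (aL j h) • sN j := by
    intro h
    simp only [R, ContinuousLinearMap.sub_apply, ContinuousLinearMap.id_apply,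
      ContinuousLinearMap.sum_apply, ContinuousLinearMap.smulRight_apply]
  have hsum_fin : ∀ h : X, ∑ j ∈ Finset.range n, (aL j h) • sN j
      = ∑ i : Fin n, (ℓ i h) • sv i := by
    intro h
    rw [← Fin.sum_univ_eq_sum_range (fun j => (aL j h) • sN j) n]
    apply Finset.sum_congr rfl
    intro i _
    simp only [aL, sN, dif_pos i.isLt, Fin.eta]
  have hRM : ∀ h : X, R h ∈ M := by
    intro h
    rw [← Submodule.Quotient.mk_eq_zero M, ← Submodule.mkQ_apply]
    rw [hRapp, hsum_fin]
    rw [map_sub, map_sum]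
    have hterm : ∀ i : Fin n, M.mkQ ((ℓ i h) • sv i) = (Bf.repr (M.mkQ h) i) • Bf i := by
      intro i
      rw [map_smul, hsvQ]
      congr 1
    rw [Finset.sum_congr rfl (fun i _ => hterm i), Module.Basis.sum_repr, sub_self]
  -- derivative along M
  set T : M →L[ℝ] Y := fderiv ℝ (fun v : M => f (x + (v : X))) 0 with hTdef
  have hTd : HasFDerivAt (fun v : M => f (x + (v : X))) T 0 := hdiff.hasFDerivAt
  let RM : X →L[ℝ] M := R.codRestrict M hRM
  let T' : X →L[ℝ] Y := (T.comp RM) + ∑ j ∈ Finset.range n, (aL j).smulRight (dN j)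
  have hT'app : ∀ h : X, T' h = T (RM h) + ∑ j ∈ Finset.range n, (aL j h) • dN j := by
    intro h
    simp only [T', ContinuousLinearMap.add_apply, ContinuousLinearMap.comp_apply,
      ContinuousLinearMap.sum_apply, ContinuousLinearMap.smulRight_apply]
  -- constants
  let κ : ℕ → ℝ := fun j => ‖aL j‖ * (‖sN j‖ + 1) + 1
  have hκ0 : ∀ j, 0 ≤ κ j := fun j => by
    have h1 := norm_nonneg (aL j)
    have h2 := norm_nonneg (sN j)
    have h3 : 0 ≤ ‖aL j‖ * (‖sN j‖ + 1) := mul_nonneg h1 (by linarith)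
    simp only [κ]; linarith
  have hκsum : 0 ≤ ∑ j ∈ Finset.range n, κ j := Finset.sum_nonneg fun j _ => hκ0 j
  obtain ⟨C0, hC0def⟩ : ∃ y : ℝ, y = ‖R‖ + (∑ j ∈ Finset.range n, κ j) + 1 := ⟨_, rfl⟩
  have hC0pos : 0 < C0 := by
    have := norm_nonneg R
    rw [hC0def]; linarith
  have hRC0 : ‖R‖ ≤ C0 := by rw [hC0def]; linarith
  have hRb : ∀ h : X, ‖R h‖ ≤ C0 * ‖h‖ := by
    intro h
    refine le_trans (R.le_opNorm h) ?_
    exact mul_le_mul_of_nonneg_right hRC0 (norm_nonneg h)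
  have hκC0 : ∀ j, j < n → κ j ≤ C0 := by
    intro j hj
    have h1 : κ j ≤ ∑ i ∈ Finset.range n, κ i :=
      Finset.single_le_sum (fun i _ => hκ0 i) (Finset.mem_range.2 hj)
    have := norm_nonneg R
    rw [hC0def]; linarith
  have hab : ∀ (j : ℕ) (h : X), |aL j h| ≤ C0 * ‖h‖ := by
    intro j h
    by_cases hj : j < n
    · have h1 : |aL j h| ≤ ‖aL j‖ * ‖h‖ := by
        rw [← Real.norm_eq_abs]; exact (aL j).le_opNorm h
      refine le_trans h1 ?_
      apply mul_le_mul_of_nonneg_right _ (norm_nonneg h)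
      refine le_trans ?_ (hκC0 j hj)
      simp only [κ]
      have h2 : ‖aL j‖ * 1 ≤ ‖aL j‖ * (‖sN j‖ + 1) :=
        mul_le_mul_of_nonneg_left (by have := norm_nonneg (sN j); linarith) (norm_nonneg _)
      linarith
    · have : aL j = 0 := dif_neg hj
      rw [this]
      simp only [ContinuousLinearMap.zero_apply, abs_zero]
      positivity
  have hterm_bound : ∀ (j : ℕ) (h : X), ‖(aL j h) • sN j‖ ≤ κ j * ‖h‖ := by
    intro j h
    rw [norm_smul, Real.norm_eq_abs]
    have h1 : |aL j h| ≤ ‖aL j‖ * ‖h‖ := by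
      rw [← Real.norm_eq_abs]; exact (aL j).le_opNorm h
    have h2 : |aL j h| * ‖sN j‖ ≤ (‖aL j‖ * ‖h‖) * ‖sN j‖ :=
      mul_le_mul_of_nonneg_right h1 (norm_nonneg _)
    refine le_trans h2 ?_
    have h3 : ‖aL j‖ * ‖sN j‖ ≤ κ j := by
      simp only [κ]
      have h4 : ‖aL j‖ * ‖sN j‖ ≤ ‖aL j‖ * (‖sN j‖ + 1) :=
        mul_le_mul_of_nonneg_left (by linarith) (norm_nonneg _)
      linarith
    calc ‖aL j‖ * ‖h‖ * ‖sN j‖ = (‖aL j‖ * ‖sN j‖) * ‖h‖ := by ring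
    _ ≤ κ j * ‖h‖ := mul_le_mul_of_nonneg_right h3 (norm_nonneg _)
  have hpartial : ∀ (h : X) (k : ℕ), k ≤ n →
      ‖R h + ∑ j ∈ Finset.range k, (aL j h) • sN j‖ ≤ C0 * ‖h‖ := by
    intro h k hk
    have h1 : ‖∑ j ∈ Finset.range k, (aL j h) • sN j‖
        ≤ ∑ j ∈ Finset.range k, κ j * ‖h‖ :=
      le_trans (norm_sum_le _ _) (Finset.sum_le_sum fun j _ => hterm_bound j h)
    have h2 : ∑ j ∈ Finset.range k, κ j * ‖h‖ ≤ ∑ j ∈ Finset.range n, κ j * ‖h‖ := by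
      apply Finset.sum_le_sum_of_subset_of_nonneg
      · exact Finset.range_subset_range.2 hk
      · intro j _ _
        exact mul_nonneg (hκ0 j) (norm_nonneg h)
    have h3 : ∑ j ∈ Finset.range n, κ j * ‖h‖ = (∑ j ∈ Finset.range n, κ j) * ‖h‖ :=
      (Finset.sum_mul _ _ _).symm
    have h4 := norm_add_le (R h) (∑ j ∈ Finset.range k, (aL j h) • sN j)
    have h5 := hRb h
    have h6 : (‖R‖ + (∑ j ∈ Finset.range n, κ j)) * ‖h‖ ≤ C0 * ‖h‖ := by
      apply mul_le_mul_of_nonneg_right _ (norm_nonneg h)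
      rw [hC0def]; linarith
    have h7 : ‖R‖ * ‖h‖ ≤ C0 * ‖h‖ := mul_le_mul_of_nonneg_right hRC0 (norm_nonneg h)
    calc ‖R h + ∑ j ∈ Finset.range k, (aL j h) • sN j‖
        ≤ ‖R h‖ + ‖∑ j ∈ Finset.range k, (aL j h) • sN j‖ := h4
    _ ≤ ‖R‖ * ‖h‖ + (∑ j ∈ Finset.range n, κ j) * ‖h‖ := by
        rw [← h3]
        exact add_le_add (R.le_opNorm h) (le_trans h1 h2)
    _ ≤ C0 * ‖h‖ := by rw [← add_mul]; exact h6
  -- the main Fréchet estimate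
  have hmain : HasFDerivAt f T' x := by
    rw [hasFDerivAt_iff_isLittleO_nhds_zero, Asymptotics.isLittleO_iff]
    intro c hc
    -- the small parameters
    have hC0ne : C0 ≠ 0 := ne_of_gt hC0pos
    obtain ⟨εs, hεs, hεskey⟩ : ∃ εs > (0:ℝ), (n:ℝ) * (εs * (3 * C0)) ≤ c / 2 := by
      have hden : (0:ℝ) < ((n:ℝ)+1) * (6 * C0) :=
        mul_pos (by positivity) (by linarith)
      refine ⟨c / (((n:ℝ)+1) * (6 * C0)), div_pos hc hden, ?_⟩
      have hkey : c / (((n:ℝ)+1) * (6 * C0)) * (3 * C0) = c / (2*((n:ℝ)+1)) := by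
        field_simp; ring
      rw [hkey, mul_div_assoc']
      rw [div_le_div_iff₀ (by positivity) two_pos]
      have hn0 : (0:ℝ) ≤ (n:ℝ) := Nat.cast_nonneg n
      have := mul_nonneg hc.le hn0
      ring_nf
      nlinarith
    have hε₀ : (0:ℝ) < c / (2 * C0) := div_pos hc (by linarith)
    -- RelStrong data at precision εs
    have hδs' : ∀ j : ℕ, ∃ δ, δ > 0 ∧ ∀ z : X, ∀ t : ℝ, ‖z - x‖ < δ → 0 < t → t < δ →
        ‖f (z + t • sN j) - f z - t • dN j‖ ≤ εs * (t + ‖z - x‖) := by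
      intro j
      obtain ⟨δ, hδ0, hδp⟩ := hRS j εs hεs
      exact ⟨δ, hδ0, hδp⟩
    choose δs hδspos hδsprop using hδs'
    obtain ⟨δm, hδm0, hδmle⟩ := exists_pos_le_all n δs (fun j _ => hδspos j)
    -- the littleO of the derivative along M
    have hTlo := hTd.isLittleO.def hε₀
    rw [Metric.eventually_nhds_iff] at hTlo
    obtain ⟨δ₀, hδ₀0, hδ₀p⟩ := hTlo
    -- choice of the neighbourhood
    refine Metric.eventually_nhds_iff.2
      ⟨min δ₀ δm / C0, div_pos (lt_min hδ₀0 hδm0) hC0pos, fun h hh => ?_⟩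
    rw [dist_zero_right] at hh
    have hC0h : C0 * ‖h‖ < min δ₀ δm := by
      have := mul_lt_mul_of_pos_left hh hC0pos
      rwa [mul_div_cancel₀ _ (ne_of_gt hC0pos)] at this
    have hC0h0 : 0 ≤ C0 * ‖h‖ := mul_nonneg hC0pos.le (norm_nonneg h)
    -- telescoping
    have tele : ∀ k, k ≤ n →
        ‖f (x + R h + ∑ j ∈ Finset.range k, (aL j h) • sN j) - f (x + R h)
          - ∑ j ∈ Finset.range k, (aL j h) • dN j‖ ≤ (k:ℝ) * (εs * (3 * (C0 * ‖h‖))) := by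
      intro k
      induction k with
      | zero => intro _; simp
      | succ m ih =>
        intro hm1
        have hm : m ≤ n := Nat.le_of_succ_le hm1
        have ihm := ih hm
        rw [Finset.sum_range_succ, Finset.sum_range_succ]
        have hw1 : ‖(x + R h + ∑ j ∈ Finset.range m, (aL j h) • sN j) - x‖ ≤ C0 * ‖h‖ := by
          have heq : (x + R h + ∑ j ∈ Finset.range m, (aL j h) • sN j) - x
              = R h + ∑ j ∈ Finset.range m, (aL j h) • sN j := by abel
          rw [heq]; exact hpartial h m hm
        have hw2 : ‖(x + R h + ∑ j ∈ Finset.range m, (aL j h) • sN j)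
            + (aL m h) • sN m - x‖ ≤ C0 * ‖h‖ := by
          have heq : (x + R h + ∑ j ∈ Finset.range m, (aL j h) • sN j)
              + (aL m h) • sN m - x
              = R h + ∑ j ∈ Finset.range (m+1), (aL j h) • sN j := by
            rw [Finset.sum_range_succ]; abel
          rw [heq]; exact hpartial h (m+1) hm1
        have hδsm : C0 * ‖h‖ < δs m :=
          lt_of_lt_of_le hC0h (le_trans (min_le_right _ _) (hδmle m (lt_of_lt_of_le (Nat.lt_succ_self m) hm1)))
        have hstep := relStrong_step hεs.le (hδsprop m)
          (x + R h + ∑ j ∈ Finset.range m, (aL j h) • sN j) (aL m h)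
          (lt_of_le_of_lt hw1 hδsm) (lt_of_le_of_lt hw2 hδsm)
          (lt_of_le_of_lt (hab m h) hδsm)
        have hstep2 : ‖f ((x + R h + ∑ j ∈ Finset.range m, (aL j h) • sN j) + (aL m h) • sN m)
            - f (x + R h + ∑ j ∈ Finset.range m, (aL j h) • sN j) - (aL m h) • dN m‖
            ≤ εs * (3 * (C0 * ‖h‖)) := by
          refine le_trans hstep ?_
          apply mul_le_mul_of_nonneg_left _ hεs.le
          have := hab m h
          linarith [hw1, hw2]
        have hiden : f ((x + R h + ∑ j ∈ Finset.range m, (aL j h) • sN j) + (aL m h) • sN m)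
            - f (x + R h)
            - ((∑ j ∈ Finset.range m, (aL j h) • dN j) + (aL m h) • dN m)
            = (f ((x + R h + ∑ j ∈ Finset.range m, (aL j h) • sN j) + (aL m h) • sN m)
              - f (x + R h + ∑ j ∈ Finset.range m, (aL j h) • sN j) - (aL m h) • dN m)
              + (f (x + R h + ∑ j ∈ Finset.range m, (aL j h) • sN j) - f (x + R h)
                - ∑ j ∈ Finset.range m, (aL j h) • dN j) := by abel
        have hassoc : x + R h + ((∑ j ∈ Finset.range m, (aL j h) • sN j) + (aL m h) • sN m)
            = (x + R h + ∑ j ∈ Finset.range m, (aL j h) • sN j) + (aL m h) • sN m := by abel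
        rw [hassoc]
        rw [hiden]
        refine le_trans (norm_add_le _ _) ?_
        have hle := add_le_add hstep2 ihm
        refine le_trans hle ?_
        have : (0:ℝ) ≤ εs * (3 * (C0 * ‖h‖)) :=
          mul_nonneg hεs.le (mul_nonneg (by norm_num)
            (mul_nonneg hC0pos.le (norm_nonneg h)))
        push_cast
        ring_nf
        linarith
    have hfinal := tele n le_rfl
    -- identification of points
    have hxh : x + R h + ∑ j ∈ Finset.range n, (aL j h) • sN j = x + h := by
      rw [hRapp]; abel
    rw [hxh] at hfinal
    -- M-part
    have hMest : ‖f (x + R h) - f x - T (RM h)‖ ≤ (c / (2 * C0)) * (C0 * ‖h‖) := by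
      have hvn : ‖(RM h : M)‖ = ‖R h‖ := rfl
      have hvd : dist (RM h) (0 : M) < δ₀ := by
        rw [dist_zero_right, hvn]
        exact lt_of_le_of_lt (hRb h) (lt_of_lt_of_le hC0h (min_le_left _ _))
      have := hδ₀p hvd
      simp only [sub_zero] at this
      have hco : ((RM h : M) : X) = R h := rfl
      rw [hco] at this
      simp only [Submodule.coe_zero, add_zero] at this
      refine le_trans this ?_
      rw [hvn]
      apply mul_le_mul_of_nonneg_left _ hε₀.le
      exact hRb h
    -- combine
    have hdecomp : f (x + h) - f x - T' h
        = (f (x + h) - f (x + R h) - ∑ j ∈ Finset.range n, (aL j h) • dN j)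
          + (f (x + R h) - f x - T (RM h)) := by
      rw [hT'app]; abel
    rw [hdecomp]
    refine le_trans (norm_add_le _ _) ?_
    have h1 : (n:ℝ) * (εs * (3 * (C0 * ‖h‖))) ≤ (c/2) * ‖h‖ := by
      have heq : (n:ℝ) * (εs * (3 * (C0 * ‖h‖))) = ((n:ℝ) * (εs * (3 * C0))) * ‖h‖ := by ring
      rw [heq]
      exact mul_le_mul_of_nonneg_right hεskey (norm_nonneg h)
    have h2 : (c / (2 * C0)) * (C0 * ‖h‖) = (c/2) * ‖h‖ := by
      field_simp
    linarith [hfinal, hMest]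
  exact hmain.differentiableAt


theorem sigmaPorous_exceptional_set_finite_codim_and_directional
    [TopologicalSpace.SeparableSpace X] [TopologicalSpace.SeparableSpace Y]
    (G : Set X) (hG : IsOpen G) (f : X → Y) :
    ∃ A : Set X, A ⊆ G ∧ SigmaPorous A ∧
      ∀ x ∈ G \ A,
        (LipschitzAtPt f x ∧
         (∃ M : Submodule ℝ X, IsClosed (M : Set X) ∧ FiniteDimensional ℝ (X ⧸ M) ∧
            FrechetDiffAlong f M x) ∧
         (∃ S : Set X, Dense (Submodule.span ℝ S : Set X) ∧
            ∀ u ∈ S, HasOneSidedDirDeriv f x u)) →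
        DifferentiableAt ℝ f x := by
  haveI : Nonempty X := ⟨0⟩
  haveI : Nonempty Y := ⟨0⟩
  set xs : ℕ → X := TopologicalSpace.denseSeq X with hxsdef
  have hxs : DenseRange xs := TopologicalSpace.denseRange_denseSeq X
  set ys : ℕ → Y := TopologicalSpace.denseSeq Y with hysdef
  have hys : DenseRange ys := TopologicalSpace.denseRange_denseSeq Y
  let I := ℕ × ℕ × ℕ × ℚ × ℚ
  let idx : ℕ ≃ I := (Denumerable.eqv I).symm
  let u : ℕ → Set X := fun m =>
    piece f G (xs (idx m).1) (ys (idx m).2.1) (idx m).2.2.1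
      (((idx m).2.2.2.1 : ℚ) : ℝ) (((idx m).2.2.2.2 : ℚ) : ℝ)
  refine ⟨⋃ m, u m, ?_, ⟨u, fun m => porous_piece _ _ _ _ _ _ _, rfl⟩, ?_⟩
  · intro y hy
    obtain ⟨m, hm⟩ := mem_iUnion.1 hy
    exact hm.1
  · rintro x ⟨hxG, hxA⟩ ⟨hLip, ⟨M, hMc, hMfd, hMdiff⟩, S, hSdense, hSder⟩
    refine diff_of_relStrong M hMc hMfd hMdiff S hSdense ?_
    intro v hv
    obtain ⟨d, hd⟩ := hSder v hv
    refine ⟨d, ?_⟩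
    by_contra hns
    obtain ⟨i, j, K, q, e, hmem⟩ :=
      mem_piece_of_not_relStrong hxG hLip hd hns xs hxs ys hys
    refine hxA (mem_iUnion.2 ⟨(Denumerable.eqv I) (i, j, K, q, e), ?_⟩)
    have hy : idx ((Denumerable.eqv I) (i, j, K, q, e)) = (i, j, K, q, e) := by
      simp only [idx, Equiv.symm_apply_apply]
    simp only [u, hy]
    exact hmem
end

section
/- Let X, Y be separable Banach spaces, G ⊆ X open, and f : G → Y a Lipschitz mapping. Then the set of all points x ∈ G at which f is Gâteaux differentiable and Fréchet differentiable along some closed subspace of finite codimension, but not Fréchet differentiable, is σ-upper porous. -/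
set_option maxHeartbeats 4000000
set_option linter.unusedVariables false
set_option linter.unusedSectionVars false


open Metric Set Topology
open Filter

variable {X Y : Type*} [NormedAddCommGroup X] [NormedSpace ℝ X] [CompleteSpace X]
  [NormedAddCommGroup Y] [NormedSpace ℝ Y] [CompleteSpace Y]

/-- `f` is Gâteaux differentiable at `x`. -/
def GateauxDiffAt (f : X → Y) (x : X) : Prop :=
  ∃ T : X →L[ℝ] Y, ∀ u : X, HasDerivAt (fun t : ℝ => f (x + t • u)) (T u) 0

lemma exists_cluster_of_norm_one {Z : Type*} [NormedAddCommGroup Z] [NormedSpace ℝ Z]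
    [FiniteDimensional ℝ Z] (ξ : ℕ → Z) (h : ∀ n, ‖ξ n‖ = 1) :
    ∃ l : Z, ‖l‖ = 1 ∧ ∀ τ : ℝ, 0 < τ → ∀ N : ℕ, ∃ n, N ≤ n ∧ ‖ξ n - l‖ < τ := by
  haveI := FiniteDimensional.proper ℝ Z
  obtain ⟨l, hl, φ, hφ, htend⟩ := (isCompact_sphere (0:Z) 1).tendsto_subseq
    (x := ξ) (fun n => by simpa [mem_sphere_iff_norm] using h n)
  refine ⟨l, by simpa [mem_sphere_iff_norm] using hl, fun τ hτ N => ?_⟩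
  obtain ⟨N', hN'⟩ := Metric.tendsto_atTop.1 htend τ hτ
  refine ⟨φ (max N N'), le_trans (le_max_left _ _) (hφ.id_le _), ?_⟩
  have := hN' (max N N') (le_max_right _ _)
  simpa [dist_eq_norm] using this

def PorSet (f : X → Y) (G : Set X) (K : ℝ) (e : X) (g : Y) (ε₂ ε₃ δ θ₂ : ℝ) : Set X :=
  {x | (0 < ε₃ ∧ ε₃ < ε₂ ∧ 0 < δ ∧ 0 < θ₂ ∧ 1/2 ≤ ‖e‖ ∧ ‖e‖ ≤ 2) ∧
    x ∈ G ∧ ball x (4*δ) ⊆ G ∧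
    (∀ t : ℝ, 0 < t → t ≤ δ → ‖f (x + t • e) - f x - t • g‖ ≤ ε₃ * t) ∧
    (∀ ρ : ℝ, 0 < ρ → ρ ≤ δ → ∃ v : X, ∃ s : ℝ, ‖v‖ ≤ ρ ∧ 0 < s ∧ s ≤ ρ ∧ θ₂ * ‖v‖ ≤ s ∧
      ε₂ * s ≤ ‖f (x + v + s • e) - f (x + v) - s • g‖)}

lemma porous_PorSet (f : X → Y) (G : Set X) (K : NNReal) (hf : LipschitzOnWith K f G)
    (e : X) (g : Y) (ε₂ ε₃ δ θ₂ : ℝ) : Porous (PorSet f G (K:ℝ) e g ε₂ ε₃ δ θ₂) := by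
  intro x hx
  obtain ⟨⟨hε₃, hε₃₂, hδ, hθ₂, he₁, he₂⟩, hxG, hballG, hR1, hW⟩ := hx
  have hK0 : (0:ℝ) ≤ (K:ℝ) := K.coe_nonneg
  set c : ℝ := (ε₂ - ε₃) / (4 * ((K:ℝ) + 1)) with hcdef
  have hcpos : 0 < c := div_pos (by linarith) (by linarith)
  set c₁ : ℝ := min c 1 with hc₁def
  have hc₁pos : 0 < c₁ := lt_min hcpos one_pos
  have hc₁le1 : c₁ ≤ 1 := min_le_right _ _
  have hc₁lec : c₁ ≤ c := min_le_left _ _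
  refine ⟨min (c₁*θ₂) (1/2), lt_min (mul_pos hc₁pos hθ₂) (by norm_num), fun δ' hδ' => ?_⟩
  set ρ : ℝ := min δ (δ'/2) with hρdef
  have hρpos : 0 < ρ := lt_min hδ (by linarith)
  have hρδ : ρ ≤ δ := min_le_left _ _
  have hρδ' : ρ ≤ δ'/2 := min_le_right _ _
  obtain ⟨v, s, hv, hs, hsρ, hθv, hmain⟩ := hW ρ hρpos hρδ
  have hsδ : s ≤ δ := le_trans hsρ hρδ
  -- the hole: no point of the set is within c₁ * s of x + v
  have hole : ∀ y, y ∈ PorSet f G (K:ℝ) e g ε₂ ε₃ δ θ₂ → c₁ * s ≤ ‖y - (x+v)‖ := by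
    intro y hy
    by_contra hlt
    push_neg at hlt
    obtain ⟨_, hyG, hyball, hyR1, -⟩ := hy
    have hse : ‖s • e‖ ≤ 2*s := by
      rw [norm_smul, Real.norm_eq_abs, abs_of_pos hs]; nlinarith
    have hzG : x + v ∈ G := hballG (by
      rw [mem_ball, dist_eq_norm, add_sub_cancel_left]
      calc ‖v‖ ≤ ρ := hv
        _ ≤ δ := hρδ
        _ < 4*δ := by linarith)
    have hzsG : x + v + s • e ∈ G := hballG (by
      rw [mem_ball, dist_eq_norm]
      have : x + v + s • e - x = v + s • e := by abel
      rw [this]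
      calc ‖v + s • e‖ ≤ ‖v‖ + ‖s • e‖ := norm_add_le _ _
        _ ≤ δ + 2*s := by linarith
        _ < 4*δ := by nlinarith)
    have hysG : y + s • e ∈ G := hyball (by
      rw [mem_ball, dist_eq_norm, add_sub_cancel_left]
      calc ‖s • e‖ ≤ 2*s := hse
        _ < 4*δ := by nlinarith)
    have est1 : ‖f (x + v + s • e) - f (y + s • e)‖ ≤ (K:ℝ) * ‖y - (x+v)‖ := by
      have := hf.dist_le_mul _ hzsG _ hysG
      rw [dist_eq_norm, dist_eq_norm] at this
      have h2 : x + v + s • e - (y + s • e) = -(y - (x+v)) := by abel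
      rw [h2, norm_neg] at this
      exact this
    have est2 : ‖f y - f (x + v)‖ ≤ (K:ℝ) * ‖y - (x+v)‖ := by
      have := hf.dist_le_mul _ hyG _ hzG
      rw [dist_eq_norm, dist_eq_norm] at this
      exact this
    have est3 : ‖f (y + s • e) - f y - s • g‖ ≤ ε₃ * s := hyR1 s hs hsδ
    have key : ‖f (x + v + s • e) - f (x + v) - s • g‖ ≤
        ε₃ * s + 2 * (K:ℝ) * ‖y - (x+v)‖ := by
      have hid : f (x + v + s • e) - f (x + v) - s • g =
          (f (x + v + s • e) - f (y + s • e)) + (f (y + s • e) - f y - s • g)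
            + (f y - f (x + v)) := by abel
      rw [hid]
      calc ‖(f (x + v + s • e) - f (y + s • e)) + (f (y + s • e) - f y - s • g)
            + (f y - f (x + v))‖
          ≤ ‖(f (x + v + s • e) - f (y + s • e)) + (f (y + s • e) - f y - s • g)‖
            + ‖f y - f (x + v)‖ := norm_add_le _ _
        _ ≤ ‖f (x + v + s • e) - f (y + s • e)‖ + ‖f (y + s • e) - f y - s • g‖
            + ‖f y - f (x + v)‖ := by
              have := norm_add_le (f (x + v + s • e) - f (y + s • e))
                (f (y + s • e) - f y - s • g)
              linarith
        _ ≤ (K:ℝ) * ‖y - (x+v)‖ + ε₃ * s + (K:ℝ) * ‖y - (x+v)‖ := by linarith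
        _ = ε₃ * s + 2 * (K:ℝ) * ‖y - (x+v)‖ := by ring
    have hKd : 2 * (K:ℝ) * ‖y - (x+v)‖ ≤ 2 * (K:ℝ) * (c₁ * s) := by
      apply mul_le_mul_of_nonneg_left (le_of_lt hlt) (by positivity)
    have hcc : 2 * (K:ℝ) * (c₁ * s) ≤ (ε₂ - ε₃)/2 * s := by
      have hq : ε₂ - ε₃ = 4 * ((K:ℝ) + 1) * c := by
        rw [hcdef]; field_simp
      have h1 : (K:ℝ) * (c₁ * s) ≤ (K:ℝ) * (c * s) :=
        mul_le_mul_of_nonneg_left (mul_le_mul_of_nonneg_right hc₁lec hs.le) hK0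
      have h2 : (0:ℝ) ≤ c * s := by positivity
      rw [hq]; ring_nf; nlinarith [h1, h2]
    have hpos := mul_pos (sub_pos.2 hε₃₂) hs
    linarith
  -- construct the porosity witness point
  set cst : ℝ := min (c₁*θ₂) (1/2) with hcstdef
  have hcst₁ : cst ≤ c₁*θ₂ := min_le_left _ _
  have hcst₂ : cst ≤ 1/2 := min_le_right _ _
  by_cases hcase : c₁ * s ≤ 16 * ‖v‖
  · -- Case A : t = x + v
    have hvpos : 0 < ‖v‖ := by nlinarith [mul_pos hc₁pos hs]
    refine ⟨x + v, ?_, ?_, ?_⟩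
    · rw [mem_ball, dist_eq_norm, add_sub_cancel_left]; linarith
    · intro h
      have : v = 0 := by
        have := congrArg (fun z => z - x) h
        simpa using this
      rw [this, norm_zero] at hvpos; exact lt_irrefl _ hvpos
    · rw [eq_empty_iff_forall_notMem]
      rintro y ⟨hy1, hy2⟩
      rw [mem_ball, dist_eq_norm, dist_eq_norm, add_sub_cancel_left] at hy1
      have h1 : cst * ‖v‖ ≤ c₁ * s := by
        calc cst * ‖v‖ ≤ (c₁*θ₂) * ‖v‖ := mul_le_mul_of_nonneg_right hcst₁ (norm_nonneg _)
          _ = c₁ * (θ₂ * ‖v‖) := by ring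
          _ ≤ c₁ * s := mul_le_mul_of_nonneg_left hθv hc₁pos.le
      have := hole y hy2
      linarith
  · -- Case B : t = x + v + (c₁*s/4) • e
    push_neg at hcase
    set lam : ℝ := c₁ * s / 4 with hlamdef
    have hlampos : 0 < lam := by positivity
    set t : X := x + v + lam • e with htdef
    have hlame : ‖lam • e‖ ≤ c₁ * s / 2 := by
      rw [norm_smul, Real.norm_eq_abs, abs_of_pos hlampos]; nlinarith
    have hlame' : c₁ * s / 8 ≤ ‖lam • e‖ := by
      rw [norm_smul, Real.norm_eq_abs, abs_of_pos hlampos]; nlinarith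
    have htx : t - x = v + lam • e := by rw [htdef]; abel
    have htxl : ‖t - x‖ ≤ c₁ * s := by
      rw [htx]
      calc ‖v + lam • e‖ ≤ ‖v‖ + ‖lam • e‖ := norm_add_le _ _
        _ ≤ c₁ * s / 16 + c₁ * s / 2 := by linarith
        _ ≤ c₁ * s := by linarith
    have htxpos : c₁ * s / 16 ≤ ‖t - x‖ := by
      rw [htx]
      have := norm_sub_norm_le (lam • e) (-v)
      have h2 : ‖lam • e - -v‖ = ‖v + lam • e‖ := by rw [show lam • e - -v = v + lam • e by abel]
      rw [h2] at this
      rw [norm_neg] at this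
      linarith
    refine ⟨t, ?_, ?_, ?_⟩
    · rw [mem_ball, dist_eq_norm]
      have hc₁s : c₁ * s ≤ s := by nlinarith
      linarith
    · intro h
      rw [h, sub_self, norm_zero] at htxpos
      nlinarith [mul_pos hc₁pos hs]
    · rw [eq_empty_iff_forall_notMem]
      rintro y ⟨hy1, hy2⟩
      rw [mem_ball, dist_eq_norm, dist_eq_norm] at hy1
      have hyz : ‖y - (x+v)‖ < c₁ * s := by
        have h3 : ‖y - (x+v)‖ ≤ ‖y - t‖ + ‖t - (x+v)‖ := by
          have := norm_add_le (y - t) (t - (x+v))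
          rw [show y - t + (t - (x+v)) = y - (x+v) by abel] at this
          exact this
        have h4 : ‖t - (x+v)‖ = ‖lam • e‖ := by rw [htdef]; congr 1; abel
        have h5 : cst * ‖t - x‖ ≤ (1/2) * (c₁ * s) := by
          calc cst * ‖t - x‖ ≤ (1/2) * ‖t - x‖ :=
            mul_le_mul_of_nonneg_right hcst₂ (norm_nonneg _)
            _ ≤ (1/2) * (c₁ * s) := by linarith
        linarith
      have := hole y hy2
      linarith

lemma exists_cluster_quotient {X : Type*} [NormedAddCommGroup X] [NormedSpace ℝ X]
    (M : Submodule ℝ X) (hMc : IsClosed (M : Set X)) (hMf : FiniteDimensional ℝ (X ⧸ M))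
    (ξ : ℕ → X ⧸ M) (h : ∀ n, ‖ξ n‖ = 1) :
    ∃ l : X ⧸ M, ‖l‖ = 1 ∧ ∀ τ : ℝ, 0 < τ → ∀ N : ℕ, ∃ n, N ≤ n ∧ ‖ξ n - l‖ < τ := by
  letI instN : NormedAddCommGroup (X ⧸ M) := Submodule.Quotient.normedAddCommGroup M (hS := hMc)
  exact exists_cluster_of_norm_one ξ h

lemma covering (G : Set X) (hG : IsOpen G) (f : X → Y) (K : NNReal)
    (hf : LipschitzOnWith K f G) (sX : Set X) (hsX : Dense sX) (sY : Set Y) (hsY : Dense sY)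
    {x : X} (hxG : x ∈ G) (hGat : GateauxDiffAt f x)
    (M : Submodule ℝ X) (hMc : IsClosed (M : Set X)) (hMf : FiniteDimensional ℝ (X ⧸ M))
    (hMF : FrechetDiffAlong f M x) (hnF : ¬ DifferentiableAt ℝ f x) :
    ∃ e ∈ sX, ∃ g ∈ sY, ∃ ε₂ ε₃ δq θ₂ : ℚ,
      x ∈ PorSet f G (K:ℝ) e g (ε₂:ℝ) (ε₃:ℝ) (δq:ℝ) (θ₂:ℝ) := by
  obtain ⟨T, hT⟩ := hGat
  obtain ⟨r₀, hr₀, hball⟩ := Metric.isOpen_iff.1 hG x hxG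
  have hK0 : (0:ℝ) ≤ (K:ℝ) := K.coe_nonneg
  -- Step 1 : quantitative non-Fréchet differentiability
  have hnot : ¬ HasFDerivAt f T x := fun h => hnF h.differentiableAt
  rw [hasFDerivAt_iff_isLittleO_nhds_zero, Asymptotics.isLittleO_iff] at hnot
  push_neg at hnot
  obtain ⟨ε, hεpos, hfreq⟩ := hnot
  have hbad : ∀ r : ℝ, 0 < r → ∃ u : X, ‖u‖ < r ∧ ε * ‖u‖ < ‖f (x + u) - f x - T u‖ := by
    intro r hr
    obtain ⟨u, hu1, hu2⟩ := (Metric.nhds_basis_ball.frequently_iff).1 hfreq r hr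
    rw [mem_ball_zero_iff] at hu1
    exact ⟨u, hu1, hu2⟩
  obtain ⟨εq, hεq1, hεq2⟩ := exists_rat_btwn (show (0:ℝ) < min ε 1 by
    exact lt_min hεpos one_pos)
  have hεqpos : (0:ℝ) < εq := hεq1
  have hεqε : (εq:ℝ) ≤ ε := le_of_lt (lt_of_lt_of_le hεq2 (min_le_left _ _))
  have hεq1' : (εq:ℝ) ≤ 1 := le_of_lt (lt_of_lt_of_le hεq2 (min_le_right _ _))
  have hbadq : ∀ r : ℝ, 0 < r → ∃ u : X, ‖u‖ < r ∧
      (εq:ℝ) * ‖u‖ < ‖f (x + u) - f x - T u‖ ∧ u ≠ 0 := by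
    intro r hr
    obtain ⟨u, hu1, hu2⟩ := hbad r hr
    have h3 : (εq:ℝ) * ‖u‖ ≤ ε * ‖u‖ := mul_le_mul_of_nonneg_right hεqε (norm_nonneg _)
    refine ⟨u, hu1, lt_of_le_of_lt h3 hu2, ?_⟩
    rintro rfl
    simp at hu2
  -- Step 2 : the derivative along M agrees with T
  have hMF' : DifferentiableAt ℝ (fun v : M => f (x + (v:X))) 0 := hMF
  have hD : HasFDerivAt (fun v : M => f (x + (v:X)))
      (fderiv ℝ (fun v : M => f (x + (v:X))) 0) 0 := hMF'.hasFDerivAt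
  set D := fderiv ℝ (fun v : M => f (x + (v:X))) 0 with hDdef
  have hDT : ∀ v : M, D v = T (v:X) := by
    intro v
    have hψ : HasDerivAt (fun t : ℝ => t • v) v 0 := by
      simpa using (hasDerivAt_id (0:ℝ)).smul_const v
    have h0 : HasFDerivAt (fun w : M => f (x + (w:X))) D ((0:ℝ) • v) := by
      rw [zero_smul]; exact hD
    have hcomp := h0.comp_hasDerivAt 0 hψ
    have hEq : ((fun w : M => f (x + (w:X))) ∘ (fun t : ℝ => t • v)) =
        fun t : ℝ => f (x + t • (v:X)) := by
      funext t; simp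
    rw [hEq] at hcomp
    exact hcomp.unique (hT (v:X))
  -- Step 3 : quantitative Fréchet differentiability along M, phrased in X
  have hDo := Asymptotics.isLittleO_iff.1 (hasFDerivAt_iff_isLittleO_nhds_zero.1 hD)
  have hMest : ∀ c : ℝ, 0 < c → ∃ r, 0 < r ∧ ∀ v : X, v ∈ M → ‖v‖ < r →
      ‖f (x + v) - f x - T v‖ ≤ c * ‖v‖ := by
    intro c hc
    have h1 := hDo hc
    rw [Metric.eventually_nhds_iff] at h1
    obtain ⟨r, hr, h2⟩ := h1
    refine ⟨r, hr, fun v hv hvr => ?_⟩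
    have h3 := h2 (y := (⟨v, hv⟩ : M)) (by
      rw [dist_zero_right, Submodule.coe_norm]; exact hvr)
    simpa [hDT ⟨v, hv⟩] using h3
  set CT : ℝ := ‖T‖ with hCTdef
  have hCT0 : 0 ≤ CT := norm_nonneg _
  set θ : ℝ := (εq:ℝ) / (8 * ((K:ℝ) + CT + 1)) with hθdef
  have hθpos : 0 < θ := by positivity
  have hθle : θ ≤ 1/8 := by
    rw [hθdef, div_le_iff₀ (by positivity)]
    nlinarith
  -- Step 4 : bad increments stay away from M
  obtain ⟨r₆, hr₆, hM6⟩ := hMest ((εq:ℝ)/4) (by positivity)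
  set r₁ : ℝ := min (r₀/4) (r₆/4) with hr₁def
  have hr₁pos : 0 < r₁ := lt_min (by linarith) (by linarith)
  have hr₁r₀ : r₁ ≤ r₀/4 := min_le_left _ _
  have hr₁r₆ : r₁ ≤ r₆/4 := min_le_right _ _
  have hstep1 : ∀ u : X, ‖u‖ < r₁ → (εq:ℝ) * ‖u‖ < ‖f (x + u) - f x - T u‖ →
      θ * ‖u‖ ≤ ‖(Submodule.Quotient.mk u : X ⧸ M)‖ := by
    intro u hur hbadu
    by_contra hcon
    push_neg at hcon
    have hu0 : u ≠ 0 := by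
      rintro rfl; simp at hbadu
    have hnu : 0 < ‖u‖ := norm_pos_iff.2 hu0
    obtain ⟨m, hm1, hm2⟩ := Submodule.Quotient.norm_mk_lt
      ((Submodule.Quotient.mk u : X ⧸ M))
      (show 0 < θ * ‖u‖ - ‖(Submodule.Quotient.mk u : X ⧸ M)‖ by linarith)
    have hm3 : ‖m‖ < θ * ‖u‖ := by linarith
    have hmM : u - m ∈ M := by
      have h4 : m - u ∈ M := (Submodule.Quotient.eq M).1 hm1
      simpa using M.neg_mem h4
    set v : X := u - m with hvdef
    have hvle : ‖v‖ ≤ 2 * ‖u‖ := by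
      calc ‖v‖ ≤ ‖u‖ + ‖m‖ := norm_sub_le _ _
        _ ≤ 2 * ‖u‖ := by nlinarith [hθle]
    have hxuG : x + u ∈ G := hball (by
      rw [mem_ball, dist_eq_norm, add_sub_cancel_left]; linarith)
    have hxvG : x + v ∈ G := hball (by
      rw [mem_ball, dist_eq_norm, add_sub_cancel_left]; linarith)
    have e1 : ‖f (x + u) - f (x + v)‖ ≤ (K:ℝ) * ‖m‖ := by
      have := hf.dist_le_mul _ hxuG _ hxvG
      rw [dist_eq_norm, dist_eq_norm] at this
      have h5 : x + u - (x + v) = m := by rw [hvdef]; abel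
      rw [h5] at this
      exact this
    have e2 : ‖f (x + v) - f x - T v‖ ≤ ((εq:ℝ)/4) * ‖v‖ := by
      apply hM6 v hmM
      linarith
    have e3 : ‖T v - T u‖ ≤ CT * ‖m‖ := by
      have h6 : T v - T u = T (v - u) := (map_sub T v u).symm
      have h7 : v - u = -m := by rw [hvdef]; abel
      rw [h6, h7, map_neg, norm_neg]
      exact T.le_opNorm m
    have hid : f (x + u) - f x - T u = (f (x + u) - f (x + v)) +
        (f (x + v) - f x - T v) + (T v - T u) := by abel
    have htot : ‖f (x + u) - f x - T u‖ ≤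
        (K:ℝ) * ‖m‖ + ((εq:ℝ)/4) * ‖v‖ + CT * ‖m‖ := by
      rw [hid]
      calc ‖(f (x + u) - f (x + v)) + (f (x + v) - f x - T v) + (T v - T u)‖
          ≤ ‖(f (x + u) - f (x + v)) + (f (x + v) - f x - T v)‖ + ‖T v - T u‖ :=
            norm_add_le _ _
        _ ≤ ‖f (x + u) - f (x + v)‖ + ‖f (x + v) - f x - T v‖ + ‖T v - T u‖ := by
            have := norm_add_le (f (x + u) - f (x + v)) (f (x + v) - f x - T v)
            linarith
        _ ≤ (K:ℝ) * ‖m‖ + ((εq:ℝ)/4) * ‖v‖ + CT * ‖m‖ := by linarith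
    have hKCT : ((K:ℝ) + CT) * θ ≤ (εq:ℝ)/8 := by
      rw [hθdef, ← mul_div_assoc, div_le_div_iff₀ (by positivity) (by norm_num)]
      nlinarith [hεqpos.le, hK0, hCT0]
    have b1 : (K:ℝ) * ‖m‖ ≤ (K:ℝ) * (θ * ‖u‖) := mul_le_mul_of_nonneg_left hm3.le hK0
    have b2 : CT * ‖m‖ ≤ CT * (θ * ‖u‖) := mul_le_mul_of_nonneg_left hm3.le hCT0
    have b3 : ((εq:ℝ)/4) * ‖v‖ ≤ ((εq:ℝ)/4) * (2 * ‖u‖) :=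
      mul_le_mul_of_nonneg_left hvle (by positivity)
    have b4 : ((K:ℝ) + CT) * θ * ‖u‖ ≤ ((εq:ℝ)/8) * ‖u‖ :=
      mul_le_mul_of_nonneg_right hKCT (norm_nonneg _)
    linarith [hbadu, htot, b1, b2, b3, b4, mul_pos hεqpos hnu]
  -- Step 5 : the sequence of bad increments and its direction
  have hchoice : ∀ n : ℕ, ∃ w : X, ‖w‖ < min r₁ (1/((n:ℝ)+1)) ∧
      (εq:ℝ) * ‖w‖ < ‖f (x + w) - f x - T w‖ ∧ w ≠ 0 :=
    fun n => hbadq _ (lt_min hr₁pos (by positivity))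
  choose u hu1 hu2 hu3 using hchoice
  have hu1a : ∀ n, ‖u n‖ < r₁ := fun n => lt_of_lt_of_le (hu1 n) (min_le_left _ _)
  have hu1b : ∀ n, ‖u n‖ < 1/((n:ℝ)+1) := fun n => lt_of_lt_of_le (hu1 n) (min_le_right _ _)
  have hnu : ∀ n, 0 < ‖u n‖ := fun n => norm_pos_iff.2 (hu3 n)
  set s : ℕ → ℝ := fun n => ‖(Submodule.Quotient.mk (u n) : X ⧸ M)‖ with hsdef
  have hsl : ∀ n, θ * ‖u n‖ ≤ s n := fun n => hstep1 (u n) (hu1a n) (hu2 n)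
  have hspos : ∀ n, 0 < s n := fun n => lt_of_lt_of_le (mul_pos hθpos (hnu n)) (hsl n)
  have hsle : ∀ n, s n ≤ ‖u n‖ := fun n => Submodule.Quotient.norm_mk_le M (u n)
  set ξ : ℕ → X ⧸ M := fun n => (s n)⁻¹ • (Submodule.Quotient.mk (u n) : X ⧸ M) with hξdef
  have hξmk : ∀ n, s n • ξ n = (Submodule.Quotient.mk (u n) : X ⧸ M) := by
    intro n
    rw [hξdef]
    rw [smul_smul, mul_inv_cancel₀ (ne_of_gt (hspos n)), one_smul]
  have hξ1 : ∀ n, ‖ξ n‖ = 1 := by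
    intro n
    rw [hξdef, norm_smul, norm_inv, Real.norm_eq_abs, abs_of_pos (hspos n)]
    exact inv_mul_cancel₀ (ne_of_gt (hspos n))
  obtain ⟨l, hl1, hlcl⟩ := exists_cluster_quotient M hMc hMf ξ hξ1
  -- Step 6 : choice of the parameters
  set τ : ℝ := (εq:ℝ) / (8*(3*(K:ℝ) + 3*CT + 2)) with hτdef
  have hτpos : 0 < τ := by positivity
  have hτ16 : τ ≤ (εq:ℝ)/16 := by
    rw [hτdef, div_le_div_iff₀ (by positivity) (by norm_num)]
    nlinarith [hεqpos.le, hK0, hCT0]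
  have hτ116 : τ ≤ 1/16 := le_trans hτ16 (by linarith)
  have hτsum : τ * (3*(K:ℝ) + 3*CT + 1) ≤ (εq:ℝ)/8 := by
    rw [hτdef, div_mul_eq_mul_div, div_le_div_iff₀ (by positivity) (by norm_num)]
    nlinarith [hεqpos.le, hK0, hCT0]
  obtain ⟨ebar, hebar1, hebar2⟩ := Submodule.Quotient.norm_mk_lt l hτpos
  rw [hl1] at hebar2
  obtain ⟨e, heX, hedist⟩ := hsX.exists_dist_lt ebar hτpos
  rw [dist_comm, dist_eq_norm] at hedist
  obtain ⟨g, hgY, hgdist⟩ := hsY.exists_dist_lt (T e) hτpos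
  rw [dist_eq_norm] at hgdist
  have hebar0 : ‖ebar‖ ≤ 1 + τ := le_of_lt hebar2
  have heup : ‖e‖ ≤ 2 := by
    have : ‖e‖ ≤ ‖ebar‖ + ‖e - ebar‖ := by
      have := norm_add_le (e - ebar) ebar
      rw [sub_add_cancel] at this
      linarith
    linarith
  have hmke : ‖(Submodule.Quotient.mk e : X ⧸ M) - l‖ < τ := by
    rw [← hebar1]
    calc ‖(Submodule.Quotient.mk e : X ⧸ M) - Submodule.Quotient.mk ebar‖
        = ‖(Submodule.Quotient.mk (e - ebar) : X ⧸ M)‖ := by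
          rw [Submodule.Quotient.mk_sub]
      _ ≤ ‖e - ebar‖ := Submodule.Quotient.norm_mk_le M _
      _ < τ := hedist
  have hmkelow : 1 - τ ≤ ‖(Submodule.Quotient.mk e : X ⧸ M)‖ := by
    have h1 := norm_sub_norm_le l ((Submodule.Quotient.mk e : X ⧸ M))
    rw [hl1, norm_sub_rev] at h1
    linarith
  have helow : (1:ℝ)/2 ≤ ‖e‖ := by
    have := Submodule.Quotient.norm_mk_le M e
    linarith
  -- directional estimate in the direction e
  have hTe := hT e
  rw [hasDerivAt_iff_isLittleO] at hTe
  have hTe2 := Asymptotics.isLittleO_iff.1 hTe (show (0:ℝ) < (εq:ℝ)/16 by positivity)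
  rw [Metric.eventually_nhds_iff] at hTe2
  obtain ⟨δ₀, hδ₀, hTe3⟩ := hTe2
  obtain ⟨δq, hδq1, hδq2⟩ := exists_rat_btwn (show (0:ℝ) < min δ₀ (r₀/4) by
    exact lt_min hδ₀ (by linarith))
  have hδqpos : (0:ℝ) < δq := hδq1
  have hδqδ₀ : (δq:ℝ) < δ₀ := lt_of_lt_of_le hδq2 (min_le_left _ _)
  have hδqr₀ : (δq:ℝ) < r₀/4 := lt_of_lt_of_le hδq2 (min_le_right _ _)
  obtain ⟨θ₂, hθ₂1, hθ₂2⟩ := exists_rat_btwn (show (0:ℝ) < θ/4 by positivity)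
  have hθ₂pos : (0:ℝ) < θ₂ := hθ₂1
  -- the second modulus for the estimate along M
  obtain ⟨r₇, hr₇, hM7⟩ := hMest (θ*(εq:ℝ)/32) (by positivity)
  refine ⟨e, heX, g, hgY, εq/2, εq/8, δq, θ₂, ?_⟩
  refine ⟨⟨by push_cast; positivity, by push_cast; linarith, hδqpos, hθ₂pos, helow, heup⟩,
    hxG, ?_, ?_, ?_⟩
  · -- ball x (4 δq) ⊆ G
    refine subset_trans (ball_subset_ball ?_) hball
    linarith
  · -- the directional estimate R1
    intro t ht1 ht2
    have habs : dist t 0 < δ₀ := by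
      rw [Real.dist_eq, sub_zero, abs_of_pos ht1]; linarith
    have h5 := hTe3 habs
    simp only [zero_smul, add_zero, sub_zero] at h5
    have h6 : ‖f (x + t • e) - f x - t • (T e)‖ ≤ (εq:ℝ)/16 * t := by
      have h7 : ‖t‖ = t := by rw [Real.norm_eq_abs, abs_of_pos ht1]
      rw [h7] at h5
      exact h5
    have h8 : ‖t • (T e) - t • g‖ ≤ τ * t := by
      rw [← smul_sub, norm_smul, Real.norm_eq_abs, abs_of_pos ht1]
      calc t * ‖T e - g‖ ≤ t * τ := mul_le_mul_of_nonneg_left hgdist.le ht1.le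
        _ = τ * t := mul_comm _ _
    have hid : f (x + t • e) - f x - t • g =
        (f (x + t • e) - f x - t • (T e)) + (t • (T e) - t • g) := by abel
    calc ‖f (x + t • e) - f x - t • g‖
        ≤ ‖f (x + t • e) - f x - t • (T e)‖ + ‖t • (T e) - t • g‖ := by
          rw [hid]; exact norm_add_le _ _
      _ ≤ (εq:ℝ)/16 * t + τ * t := by linarith
      _ ≤ ((εq/8 : ℚ) : ℝ) * t := by
          push_cast
          linarith [mul_le_mul_of_nonneg_right hτ16 ht1.le]
  · -- the witness condition W
    intro ρ hρ1 hρ2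
    obtain ⟨N, hN⟩ := exists_nat_one_div_lt (show (0:ℝ) < min (ρ/4) (r₇/8) by
      exact lt_min (by linarith) (by linarith))
    obtain ⟨n, hnN, hclose⟩ := hlcl τ hτpos N
    have hsmall : ‖u n‖ < min (ρ/4) (r₇/8) := by
      refine lt_trans (lt_of_lt_of_le (hu1b n) ?_) hN
      apply one_div_le_one_div_of_le (by positivity)
      have : (N:ℝ) ≤ (n:ℝ) := by exact_mod_cast hnN
      linarith
    have hsmallρ : ‖u n‖ < ρ/4 := lt_of_lt_of_le hsmall (min_le_left _ _)
    have hsmallr₇ : ‖u n‖ < r₇/8 := lt_of_lt_of_le hsmall (min_le_right _ _)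
    -- approximate the direction
    have hq1 : ‖(Submodule.Quotient.mk (u n - s n • e) : X ⧸ M)‖ ≤ 2*τ*(s n) := by
      have hid : (Submodule.Quotient.mk (u n - s n • e) : X ⧸ M) =
          s n • (ξ n - (Submodule.Quotient.mk e : X ⧸ M)) := by
        rw [Submodule.Quotient.mk_sub, ← hξmk n, smul_sub, Submodule.Quotient.mk_smul]
      rw [hid, norm_smul, Real.norm_eq_abs, abs_of_pos (hspos n)]
      have h2 : ‖ξ n - (Submodule.Quotient.mk e : X ⧸ M)‖ ≤ 2*τ := by
        have h3 := norm_add_le (ξ n - l) (l - (Submodule.Quotient.mk e : X ⧸ M))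
        rw [show ξ n - l + (l - (Submodule.Quotient.mk e : X ⧸ M)) =
          ξ n - (Submodule.Quotient.mk e : X ⧸ M) by abel] at h3
        rw [norm_sub_rev] at hmke
        linarith
      calc s n * ‖ξ n - (Submodule.Quotient.mk e : X ⧸ M)‖ ≤ s n * (2*τ) :=
            mul_le_mul_of_nonneg_left h2 (hspos n).le
        _ = 2*τ*(s n) := by ring
    obtain ⟨m, hm1, hm2⟩ := Submodule.Quotient.norm_mk_lt
      ((Submodule.Quotient.mk (u n - s n • e) : X ⧸ M)) (mul_pos hτpos (hspos n))
    have hm3 : ‖m‖ < 3*τ*(s n) := by linarith [hq1, hm2]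
    have hvM : u n - s n • e - m ∈ M := by
      rw [← Submodule.Quotient.mk_eq_zero M, Submodule.Quotient.mk_sub, hm1, sub_self]
    set v : X := u n - s n • e - m with hvdef
    have hsee : ‖s n • e‖ ≤ 2 * s n := by
      rw [norm_smul, Real.norm_eq_abs, abs_of_pos (hspos n)]
      have := mul_le_mul_of_nonneg_left heup (hspos n).le
      linarith
    have hτ1 : 3*τ ≤ 1 := by linarith
    have hvnorm : ‖v‖ ≤ 4 * ‖u n‖ := by
      calc ‖v‖ ≤ ‖u n - s n • e‖ + ‖m‖ := norm_sub_le _ _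
        _ ≤ ‖u n‖ + ‖s n • e‖ + ‖m‖ := by
            have := norm_sub_le (u n) (s n • e); linarith
        _ ≤ ‖u n‖ + 2 * s n + 3*τ*(s n) := by linarith
        _ ≤ ‖u n‖ + 2 * s n + s n := by
            have := mul_le_mul_of_nonneg_right hτ1 (hspos n).le
            linarith
        _ ≤ 4 * ‖u n‖ := by linarith [hsle n]
    refine ⟨v, s n, ?_, hspos n, ?_, ?_, ?_⟩
    · linarith
    · linarith [hsle n]
    · -- θ₂ ‖v‖ ≤ s n
      have h1 : (θ₂:ℝ) * ‖v‖ ≤ (θ/4) * (4 * ‖u n‖) := by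
        apply mul_le_mul hθ₂2.le hvnorm (norm_nonneg _) (by positivity)
      have h2 : (θ/4) * (4 * ‖u n‖) = θ * ‖u n‖ := by ring
      linarith [hsl n]
    · -- the main lower estimate
      have hw : x + v + s n • e = x + (u n - m) := by rw [hvdef]; abel
      rw [hw]
      -- memberships in G
      have hxuG : x + u n ∈ G := hball (by
        rw [mem_ball, dist_eq_norm, add_sub_cancel_left]
        calc ‖u n‖ < r₁ := hu1a n
          _ ≤ r₀/4 := hr₁r₀
          _ < r₀ := by linarith)
      have humm : ‖u n - m‖ ≤ 2 * ‖u n‖ := by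
        calc ‖u n - m‖ ≤ ‖u n‖ + ‖m‖ := norm_sub_le _ _
          _ ≤ ‖u n‖ + s n := by
              have := mul_le_mul_of_nonneg_right hτ1 (hspos n).le
              linarith [hm3]
          _ ≤ 2 * ‖u n‖ := by linarith [hsle n]
      have hxumG : x + (u n - m) ∈ G := hball (by
        rw [mem_ball, dist_eq_norm, add_sub_cancel_left]
        calc ‖u n - m‖ ≤ 2*‖u n‖ := humm
          _ < 2*r₁ := by linarith [hu1a n]
          _ < r₀ := by linarith [hr₁r₀])
      -- the five pieces
      have hA1 : (εq:ℝ) * s n < ‖f (x + u n) - f x - T (u n)‖ := by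
        have h1 := mul_le_mul_of_nonneg_left (hsle n) hεqpos.le
        linarith [hu2 n]
      have hA2 : ‖f (x + (u n - m)) - f (x + u n)‖ ≤ (K:ℝ) * (3*τ*(s n)) := by
        have h1 := hf.dist_le_mul _ hxumG _ hxuG
        rw [dist_eq_norm, dist_eq_norm] at h1
        have h2 : x + (u n - m) - (x + u n) = -m := by abel
        rw [h2, norm_neg] at h1
        calc ‖f (x + (u n - m)) - f (x + u n)‖ ≤ (K:ℝ) * ‖m‖ := h1
          _ ≤ (K:ℝ) * (3*τ*(s n)) := mul_le_mul_of_nonneg_left hm3.le hK0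
      have hA3 : ‖f (x + v) - f x - T v‖ ≤ ((εq:ℝ)/8) * s n := by
        have h1 : ‖v‖ < r₇ := by
          calc ‖v‖ ≤ 4*‖u n‖ := hvnorm
            _ < 4*(r₇/8) := by linarith
            _ ≤ r₇ := by linarith
        have h2 := hM7 v hvM h1
        have h3 : θ*(εq:ℝ)/32 * ‖v‖ ≤ θ*(εq:ℝ)/32 * (4*‖u n‖) :=
          mul_le_mul_of_nonneg_left hvnorm (by positivity)
        have h4 : θ * ‖u n‖ ≤ s n := hsl n
        have h5 : θ*(εq:ℝ)/32 * (4*‖u n‖) = ((εq:ℝ)/8) * (θ * ‖u n‖) := by ring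
        have h6 : ((εq:ℝ)/8) * (θ * ‖u n‖) ≤ ((εq:ℝ)/8) * s n :=
          mul_le_mul_of_nonneg_left h4 (by positivity)
        linarith
      have hA4 : ‖T (u n) - T v - s n • (T e)‖ ≤ CT * (3*τ*(s n)) := by
        have h1 : T (u n) - T v - s n • (T e) = T m := by
          rw [hvdef]
          simp only [map_sub, map_smul]
          abel
        rw [h1]
        calc ‖T m‖ ≤ CT * ‖m‖ := T.le_opNorm m
          _ ≤ CT * (3*τ*(s n)) := mul_le_mul_of_nonneg_left hm3.le hCT0
      have hA5 : ‖s n • (T e) - s n • g‖ ≤ τ * s n := by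
        rw [← smul_sub, norm_smul, Real.norm_eq_abs, abs_of_pos (hspos n)]
        calc s n * ‖T e - g‖ ≤ s n * τ := mul_le_mul_of_nonneg_left hgdist.le (hspos n).le
          _ = τ * s n := mul_comm _ _
      -- reverse triangle inequality
      have hrev : f (x + u n) - f x - T (u n) =
          (f (x + (u n - m)) - f (x + v) - s n • g)
          - (f (x + (u n - m)) - f (x + u n))
          + (f (x + v) - f x - T v)
          - (T (u n) - T v - s n • (T e))
          - (s n • (T e) - s n • g) := by abel
      have htri : ‖f (x + u n) - f x - T (u n)‖ ≤
          ‖f (x + (u n - m)) - f (x + v) - s n • g‖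
          + ‖f (x + (u n - m)) - f (x + u n)‖
          + ‖f (x + v) - f x - T v‖
          + ‖T (u n) - T v - s n • (T e)‖
          + ‖s n • (T e) - s n • g‖ := by
        rw [hrev]
        have n1 := norm_sub_le
          ((f (x + (u n - m)) - f (x + v) - s n • g)
            - (f (x + (u n - m)) - f (x + u n))
            + (f (x + v) - f x - T v)
            - (T (u n) - T v - s n • (T e)))
          (s n • (T e) - s n • g)
        have n2 := norm_sub_le
          ((f (x + (u n - m)) - f (x + v) - s n • g)
            - (f (x + (u n - m)) - f (x + u n))
            + (f (x + v) - f x - T v))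
          (T (u n) - T v - s n • (T e))
        have n3 := norm_add_le
          ((f (x + (u n - m)) - f (x + v) - s n • g)
            - (f (x + (u n - m)) - f (x + u n)))
          (f (x + v) - f x - T v)
        have n4 := norm_sub_le
          (f (x + (u n - m)) - f (x + v) - s n • g)
          (f (x + (u n - m)) - f (x + u n))
        linarith
      push_cast
      have h9 := mul_le_mul_of_nonneg_right hτsum (hspos n).le
      linarith [htri, hA1, hA2, hA3, hA4, hA5, h9, mul_pos hεqpos (hspos n)]

lemma Porous.inter_right {A B : Set X} (h : Porous A) : Porous (A ∩ B) := by
  intro x hx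
  obtain ⟨c, hc, hh⟩ := h x hx.1
  refine ⟨c, hc, fun δ hδ => ?_⟩
  obtain ⟨t, ht, htx, hemp⟩ := hh δ hδ
  refine ⟨t, ht, htx, ?_⟩
  rw [eq_empty_iff_forall_notMem]
  rintro y ⟨hy1, hy2, -⟩
  rw [eq_empty_iff_forall_notMem] at hemp
  exact hemp y ⟨hy1, hy2⟩

theorem sigmaPorous_gateaux_finiteCodim_not_frechet
    [TopologicalSpace.SeparableSpace X] [TopologicalSpace.SeparableSpace Y]
    (G : Set X) (hG : IsOpen G) (f : X → Y) (K : NNReal) (hf : LipschitzOnWith K f G) :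
    SigmaPorous {x ∈ G | GateauxDiffAt f x ∧
      (∃ M : Submodule ℝ X, IsClosed (M : Set X) ∧ FiniteDimensional ℝ (X ⧸ M) ∧
        FrechetDiffAlong f M x) ∧
      ¬ DifferentiableAt ℝ f x} := by
  obtain ⟨sX, hsXc, hsXd⟩ := TopologicalSpace.exists_countable_dense X
  obtain ⟨sY, hsYc, hsYd⟩ := TopologicalSpace.exists_countable_dense Y
  haveI := hsXc.to_subtype
  haveI := hsYc.to_subtype
  haveI : Nonempty X := ⟨0⟩
  haveI : Nonempty Y := ⟨0⟩
  haveI : Nonempty ↥sX := (hsXd.nonempty).to_subtype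
  haveI : Nonempty ↥sY := (hsYd.nonempty).to_subtype
  obtain ⟨F, hF⟩ := exists_surjective_nat (↥sX × ↥sY × ℚ × ℚ × ℚ × ℚ)
  refine ⟨fun n => PorSet f G (K:ℝ) ((F n).1 : X) ((F n).2.1 : Y)
      (((F n).2.2.1 : ℚ) : ℝ) (((F n).2.2.2.1 : ℚ) : ℝ) (((F n).2.2.2.2.1 : ℚ) : ℝ)
      (((F n).2.2.2.2.2 : ℚ) : ℝ) ∩
      {x ∈ G | GateauxDiffAt f x ∧
        (∃ M : Submodule ℝ X, IsClosed (M : Set X) ∧ FiniteDimensional ℝ (X ⧸ M) ∧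
          FrechetDiffAlong f M x) ∧ ¬ DifferentiableAt ℝ f x},
    fun n => (porous_PorSet f G K hf _ _ _ _ _ _).inter_right, ?_⟩
  apply Subset.antisymm
  · rintro x ⟨hxG, hGat, ⟨M, hMc, hMf, hMF⟩, hnF⟩
    obtain ⟨e, heX, g, hgY, ε₂, ε₃, δq, θ₂, hmem⟩ :=
      covering G hG f K hf sX hsXd sY hsYd hxG hGat M hMc hMf hMF hnF
    obtain ⟨n, hn⟩ := hF ⟨⟨e, heX⟩, ⟨g, hgY⟩, ε₂, ε₃, δq, θ₂⟩
    refine mem_iUnion.2 ⟨n, ?_, hxG, hGat, ⟨M, hMc, hMf, hMF⟩, hnF⟩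
    rw [hn]
    exact hmem
  · intro x hx
    obtain ⟨n, hn⟩ := mem_iUnion.1 hx
    exact hn.2
end

section
/- Let X, Y be separable Banach spaces, G ⊆ X open, and f : G → Y an arbitrary mapping. Then there exists a σ-upper porous set A ⊆ G such that for every x ∈ G \ A: if f is Lipschitz at x and there exist a finite-dimensional subspace Vˣ of X and a topological complement Wˣ of Vˣ such that f is Fréchet differentiable at x along both Vˣ and Wˣ, then f is Fréchet differentiable at x. -/
set_option linter.unusedSectionVars false
set_option maxHeartbeats 4000000

open Metric Set Topology

variable {X Y : Type*} [NormedAddCommGroup X] [NormedSpace ℝ X] [CompleteSpace X]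
  [NormedAddCommGroup Y] [NormedSpace ℝ Y] [CompleteSpace Y]

def fixSub (p : X →L[ℝ] X) : Submodule ℝ X where
  carrier := {u | p u = u}
  add_mem' := by intro a b ha hb; simp only [Set.mem_setOf_eq] at *; rw [map_add, ha, hb]
  zero_mem' := by simp only [Set.mem_setOf_eq]; exact map_zero p
  smul_mem' := by intro c a ha; simp only [Set.mem_setOf_eq] at *; rw [map_smul, ha]

lemma mem_fixSub {p : X →L[ℝ] X} {u : X} : u ∈ fixSub p ↔ p u = u := Iff.rfl

def Piece (f : X → Y) (K C : ℕ) (γ ε δm : ℝ) {k : ℕ} (xs : Fin k → X) (ys : Fin k → Y) :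
    Set X :=
  {x | ∃ (p : X →L[ℝ] X) (S R : X →L[ℝ] Y),
    (∀ u, p (p u) = p u) ∧
    (∃ _ : FiniteDimensional ℝ (fixSub p), Module.finrank ℝ (fixSub p) = k) ∧
    ‖p‖ ≤ K ∧ ‖S‖ ≤ K ∧ ‖R‖ ≤ K ∧
    (∀ y, ‖y - x‖ ≤ δm → ‖f y - f x‖ ≤ K * ‖y - x‖) ∧
    (∀ u, p u = u → ‖u‖ ≤ δm → ‖f (x + u) - f x - S u‖ ≤ γ * ‖u‖) ∧
    (∀ u, p u = 0 → ‖u‖ ≤ δm → ‖f (x + u) - f x - R u‖ ≤ γ * ‖u‖) ∧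
    (∀ u, p u = u → ∃ a : Fin k → ℝ, (∑ i, |a i|) ≤ C * ‖u‖ ∧
      ‖u - ∑ i, a i • xs i‖ ≤ γ * ‖u‖ ∧ ‖S u - ∑ i, a i • ys i‖ ≤ γ * ‖u‖) ∧
    (∀ a : Fin k → ℝ, ∃ u, p u = u ∧ ‖(∑ i, a i • xs i) - u‖ ≤ γ * ∑ i, |a i|) ∧
    (∀ u (a : Fin k → ℝ), p u = u → (∑ i, |a i|) ≤ 2 * C * ‖u‖ →
      ‖u - ∑ i, a i • xs i‖ ≤ (2*((K:ℝ)+1)*(1+C) + 2) * γ * ‖u‖ →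
      ‖S u - ∑ i, a i • ys i‖ ≤ ((K*(2*((K:ℝ)+1)*(1+C)+4) + 2)*γ) * ‖u‖) ∧
    (∀ η > (0:ℝ), ∃ h : X, ‖h‖ ≤ η ∧ ε * ‖h‖ < ‖f (x + h) - f x - (S (p h) + R (h - p h))‖)}

lemma exists_preimage_fix {p p' : X →L[ℝ] X} (hp : ∀ u, p (p u) = p u)
    {k : ℕ} [FiniteDimensional ℝ (fixSub p)] (hrk : Module.finrank ℝ (fixSub p) = k)
    [FiniteDimensional ℝ (fixSub p')] (hrk' : Module.finrank ℝ (fixSub p') = k)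
    (hlow : ∀ u ∈ fixSub p', ‖u‖ ≤ 2 * ‖p u‖) :
    ∀ v ∈ fixSub p, ∃ u ∈ fixSub p', p u = v ∧ ‖u‖ ≤ 2 * ‖v‖ := by
  have hmapsto : ∀ u ∈ fixSub p', (p : X →ₗ[ℝ] X) u ∈ fixSub p := fun u _ => hp u
  set L : fixSub p' →ₗ[ℝ] fixSub p := ((p : X →ₗ[ℝ] X)).restrict hmapsto with hL
  have hinj : Function.Injective L := by
    intro a b hab
    have hco : p (a:X) = p (b:X) := congrArg Subtype.val hab
    have h1 : p ((a:X) - (b:X)) = 0 := by rw [map_sub, hco, sub_self]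
    have h2 := hlow ((a:X) - (b:X)) (Submodule.sub_mem _ a.2 b.2)
    rw [h1, norm_zero, mul_zero] at h2
    have h3 : (a:X) - (b:X) = 0 := norm_eq_zero.mp (le_antisymm h2 (norm_nonneg _))
    exact Subtype.ext (sub_eq_zero.mp h3)
  have hsurj : Function.Surjective L := by
    have h1 : Module.finrank ℝ (LinearMap.range L) = k := by
      rw [LinearMap.finrank_range_of_inj hinj, hrk']
    have h2 : LinearMap.range L = ⊤ := Submodule.eq_top_of_finrank_eq (by rw [h1, hrk])
    exact LinearMap.range_eq_top.mp h2
  intro v hv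
  obtain ⟨u, hu⟩ := hsurj ⟨v, hv⟩
  have hpu : p (u:X) = v := congrArg Subtype.val hu
  refine ⟨u, u.2, hpu, ?_⟩
  calc ‖(u:X)‖ ≤ 2*‖p (u:X)‖ := hlow _ u.2
    _ = 2*‖v‖ := by rw [hpu]

lemma piece_porous (f : X → Y) {k : ℕ} (K C : ℕ) (γ ε δm : ℝ)
    (xs : Fin k → X) (ys : Fin k → Y)
    (hK1 : 1 ≤ (K:ℝ)) (hγ : 0 < γ) (hγ1 : γ ≤ 1) (hε : 0 < ε) (hδm : 0 < δm)
    (hΦ1 : ((K:ℝ)+1) * (1+(C:ℝ)) * γ ≤ 1/2)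
    (hΦ2 : (K:ℝ)*γ + γ*(4*K) + γ*(2+4*K)
        + K*(2*((K:ℝ)+1)*((1+C)*γ)*(K) + 2*K*γ + γ)
        + (K*(2*K*γ) + (((K*(2*((K:ℝ)+1)*(1+C)+4) + 2)*γ)+2*γ)*K) ≤ ε) :
    Porous (Piece f K C γ ε δm xs ys) := by
  intro x hx
  obtain ⟨p, S, R, hproj, ⟨hfd, hrk⟩, hpn, hSn, hRn, hLip, hPV, hPW, hT4a, hT4c, hT4b, hB5⟩ := hx
  refine ⟨γ, hγ, ?_⟩
  intro δ hδ
  have hK0 : (0:ℝ) < K := lt_of_lt_of_le one_pos hK1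
  have h6K : (0:ℝ) < 6*K+2 := by positivity
  have hη : 0 < min (δ/2) (δm / (6*K+2)) := by positivity
  obtain ⟨h, hhη, hdef⟩ := hB5 _ hη
  have hh0 : h ≠ 0 := by
    rintro rfl
    simp only [norm_zero, mul_zero, map_zero, add_zero, sub_zero, zero_sub, map_neg, neg_zero,
      sub_self] at hdef
    exact lt_irrefl 0 hdef
  have hhnorm : 0 < ‖h‖ := norm_pos_iff.mpr hh0
  have hhδ : ‖h‖ ≤ δ/2 := hhη.trans (min_le_left _ _)
  have hhm : ‖h‖ ≤ δm / (6*K+2) := hhη.trans (min_le_right _ _)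
  have hhm' : (6*K+2) * ‖h‖ ≤ δm := by
    rw [le_div_iff₀ h6K] at hhm; linarith
  have hhm1 : ‖h‖ ≤ δm := by nlinarith
  refine ⟨x + h, ?_, ?_, ?_⟩
  · rw [mem_ball, dist_eq_norm, add_sub_cancel_left]
    linarith
  · intro hcontra
    exact hh0 (by simpa using hcontra)
  · rw [Set.eq_empty_iff_forall_notMem]
    rintro z ⟨hzball, hzP⟩
    obtain ⟨p', S', R', hproj', ⟨hfd', hrk'⟩, hpn', hSn', hRn', hLip', hPV', hPW', hT4a', hT4c',
      hT4b', _⟩ := hzP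
    rw [mem_ball, dist_eq_norm, dist_eq_norm, add_sub_cancel_left] at hzball
    set d := x + h - z with hd_def
    have hd : ‖d‖ ≤ γ * ‖h‖ := by
      rw [hd_def, ← norm_neg]
      simp only [neg_sub]
      exact hzball.le
    have hdh : ‖d‖ ≤ ‖h‖ := by
      have h1 : γ * ‖h‖ ≤ 1 * ‖h‖ := mul_le_mul_of_nonneg_right hγ1 (norm_nonneg h)
      rw [one_mul] at h1; linarith
    have hρ : ∀ u ∈ fixSub p', ∃ u₀ ∈ fixSub p, ‖u - u₀‖ ≤ (1+C)*γ*‖u‖ := by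
      intro u hu
      obtain ⟨a, ha1, ha2, _⟩ := hT4a' u hu
      obtain ⟨u₀, hu₀fix, hu₀⟩ := hT4c a
      refine ⟨u₀, hu₀fix, ?_⟩
      have hdecomp : u - u₀ = (u - ∑ i, a i • xs i) + ((∑ i, a i • xs i) - u₀) :=
        (sub_add_sub_cancel _ _ _).symm
      rw [hdecomp]
      calc ‖(u - ∑ i, a i • xs i) + ((∑ i, a i • xs i) - u₀)‖
          ≤ ‖u - ∑ i, a i • xs i‖ + ‖(∑ i, a i • xs i) - u₀‖ := norm_add_le _ _
        _ ≤ γ*‖u‖ + γ*(C*‖u‖) := by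
            refine add_le_add ha2 (hu₀.trans ?_)
            exact mul_le_mul_of_nonneg_left ha1 hγ.le
        _ = (1+C)*γ*‖u‖ := by ring
    have hlow : ∀ u ∈ fixSub p', ‖u‖ ≤ 2*‖p u‖ := by
      intro u hu
      obtain ⟨u₀, hu₀fix, hclose⟩ := hρ u hu
      have h1 : ‖p u - u₀‖ ≤ K*((1+C)*γ*‖u‖) := by
        have heq : p u - u₀ = p (u - u₀) := by
          rw [map_sub, (mem_fixSub.mp hu₀fix)]
        rw [heq]
        calc ‖p (u - u₀)‖ ≤ ‖p‖ * ‖u - u₀‖ := p.le_opNorm _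
          _ ≤ K * ((1+C)*γ*‖u‖) := mul_le_mul hpn hclose (norm_nonneg _) hK0.le
      have h2 : ‖u‖ - ‖u₀‖ ≤ ‖u - u₀‖ := norm_sub_norm_le u u₀
      have h3 : ‖u₀‖ - ‖p u‖ ≤ ‖p u - u₀‖ := by
        have h4 := norm_sub_norm_le u₀ (p u)
        have hrev : ‖u₀ - p u‖ = ‖p u - u₀‖ := norm_sub_rev _ _
        linarith
      have hsmall : ((K:ℝ)+1)*((1+C)*γ)*‖u‖ ≤ (1/2)*‖u‖ := by
        apply mul_le_mul_of_nonneg_right _ (norm_nonneg u)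
        calc ((K:ℝ)+1)*((1+C)*γ) = ((K:ℝ)+1)*(1+C)*γ := by ring
          _ ≤ 1/2 := hΦ1
      have hexpand : ((K:ℝ)+1)*((1+C)*γ)*‖u‖ = (1+C)*γ*‖u‖ + K*((1+C)*γ*‖u‖) := by ring
      linarith
    haveI := hfd
    haveI := hfd'
    have hpre := exists_preimage_fix hproj hrk hrk' hlow
    set v := p h with hv_def
    set w := h - v with hw_def
    have hvfix : p v = v := hproj h
    have hw0 : p w = 0 := by rw [hw_def, map_sub, hvfix, ← hv_def, sub_self]
    have hvn : ‖v‖ ≤ K*‖h‖ := by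
      rw [hv_def]
      calc ‖p h‖ ≤ ‖p‖*‖h‖ := p.le_opNorm h
        _ ≤ K*‖h‖ := mul_le_mul_of_nonneg_right hpn (norm_nonneg h)
    have hu_eq : z - x = h - d := by rw [hd_def]; abel
    have hun : ‖z - x‖ ≤ 2*‖h‖ := by
      rw [hu_eq]
      calc ‖h - d‖ ≤ ‖h‖ + ‖d‖ := norm_sub_le _ _
        _ ≤ 2*‖h‖ := by linarith
    have hpun : ‖p (z-x)‖ ≤ K*(2*‖h‖) := by
      calc ‖p (z-x)‖ ≤ ‖p‖*‖z-x‖ := p.le_opNorm _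
        _ ≤ K*(2*‖h‖) := mul_le_mul hpn hun (norm_nonneg _) hK0.le
    obtain ⟨ut, hutfix, hutp, hutn⟩ := hpre (p (z-x)) (hproj _)
    obtain ⟨vt, hvtfix, hvtp, hvtn⟩ := hpre v hvfix
    have hutn' : ‖ut‖ ≤ 4*K*‖h‖ := by
      calc ‖ut‖ ≤ 2*‖p (z-x)‖ := hutn
        _ ≤ 2*(K*(2*‖h‖)) := by linarith
        _ = 4*K*‖h‖ := by ring
    have hvtn' : ‖vt‖ ≤ 2*‖v‖ := hvtn
    have hvtv : ‖vt - v‖ ≤ 2*((K:ℝ)+1)*((1+C)*γ)*‖v‖ := by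
      obtain ⟨u₀, hu₀fix, hclose⟩ := hρ vt hvtfix
      have h1 : v - u₀ = p (vt - u₀) := by
        rw [map_sub, hvtp, (mem_fixSub.mp hu₀fix)]
      have h2 : ‖v - u₀‖ ≤ K*((1+C)*γ*‖vt‖) := by
        rw [h1]
        calc ‖p (vt - u₀)‖ ≤ ‖p‖*‖vt - u₀‖ := p.le_opNorm _
          _ ≤ K*((1+C)*γ*‖vt‖) := mul_le_mul hpn hclose (norm_nonneg _) hK0.le
      have h3 : vt - v = (vt - u₀) + (u₀ - v) := (sub_add_sub_cancel _ _ _).symm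
      have h5 : ‖u₀ - v‖ = ‖v - u₀‖ := norm_sub_rev _ _
      calc ‖vt - v‖ ≤ ‖vt - u₀‖ + ‖u₀ - v‖ := by rw [h3]; exact norm_add_le _ _
        _ ≤ (1+C)*γ*‖vt‖ + K*((1+C)*γ*‖vt‖) := by rw [h5]; exact add_le_add hclose h2
        _ = ((K:ℝ)+1)*((1+C)*γ)*‖vt‖ := by ring
        _ ≤ ((K:ℝ)+1)*((1+C)*γ)*(2*‖v‖) := by
            apply mul_le_mul_of_nonneg_left hvtn' (by positivity)
        _ = 2*((K:ℝ)+1)*((1+C)*γ)*‖v‖ := by ring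
    have hutvt_mem : ut - vt ∈ fixSub p' := Submodule.sub_mem _ hutfix hvtfix
    have hputvt : ‖p (ut - vt)‖ ≤ K*(γ*‖h‖) := by
      have heq : p (ut - vt) = p (z - x - h) := by
        rw [map_sub, hutp, hvtp, hv_def, ← map_sub]
      have heq2 : z - x - h = -d := by rw [hu_eq]; abel
      rw [heq, heq2]
      calc ‖p (-d)‖ ≤ ‖p‖*‖-d‖ := p.le_opNorm _
        _ = ‖p‖*‖d‖ := by rw [norm_neg]
        _ ≤ K*(γ*‖h‖) := mul_le_mul hpn hd (norm_nonneg _) hK0.le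
    have hutvt : ‖ut - vt‖ ≤ 2*(K*(γ*‖h‖)) := by
      calc ‖ut - vt‖ ≤ 2*‖p (ut - vt)‖ := hlow _ hutvt_mem
        _ ≤ 2*(K*(γ*‖h‖)) := by linarith
    set wq := (z - x) - ut with hwq_def
    have hwq0 : p wq = 0 := by rw [hwq_def, map_sub, hutp, sub_self]
    have hq'eq : z + -ut = x + wq := by rw [hwq_def]; abel
    have hwqn : ‖wq‖ ≤ (2+4*K)*‖h‖ := by
      rw [hwq_def]
      calc ‖z - x - ut‖ ≤ ‖z - x‖ + ‖ut‖ := norm_sub_le _ _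
        _ ≤ 2*‖h‖ + 4*K*‖h‖ := add_le_add hun hutn'
        _ = (2+4*K)*‖h‖ := by ring
    have hKh : 4*K*‖h‖ ≤ (6*K+2)*‖h‖ := by nlinarith [norm_nonneg h, hK0.le]
    have hKh2 : (2+4*K)*‖h‖ ≤ (6*K+2)*‖h‖ := by nlinarith [norm_nonneg h, hK0.le]
    have s1 : ‖(x+h) - z‖ ≤ δm := by
      rw [← hd_def]; linarith
    have s2 : ‖ut‖ ≤ δm := by linarith
    have s3 : ‖wq‖ ≤ δm := by linarith
    have A1 : ‖f (x+h) - f z‖ ≤ (K*γ)*‖h‖ := by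
      calc ‖f (x+h) - f z‖ ≤ K*‖(x+h) - z‖ := hLip' _ s1
        _ ≤ K*(γ*‖h‖) := by
            rw [← hd_def]
            exact mul_le_mul_of_nonneg_left hd hK0.le
        _ = (K*γ)*‖h‖ := by ring
    have hnegut_fix : p' (-ut) = -ut := by rw [map_neg, (mem_fixSub.mp hutfix)]
    have hnegut_norm : ‖-ut‖ ≤ δm := by rw [norm_neg]; exact s2
    have A2 : ‖f (z + -ut) - f z - S' (-ut)‖ ≤ (γ*(4*K))*‖h‖ := by
      calc ‖f (z + -ut) - f z - S' (-ut)‖ ≤ γ*‖-ut‖ := hPV' _ hnegut_fix hnegut_norm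
        _ = γ*‖ut‖ := by rw [norm_neg]
        _ ≤ γ*(4*K*‖h‖) := mul_le_mul_of_nonneg_left hutn' hγ.le
        _ = (γ*(4*K))*‖h‖ := by ring
    have A3 : ‖f (x + wq) - f x - R wq‖ ≤ (γ*(2+4*K))*‖h‖ := by
      calc ‖f (x + wq) - f x - R wq‖ ≤ γ*‖wq‖ := hPW _ hwq0 s3
        _ ≤ γ*((2+4*K)*‖h‖) := mul_le_mul_of_nonneg_left hwqn hγ.le
        _ = (γ*(2+4*K))*‖h‖ := by ring
    have A4 : ‖R wq - R w‖ ≤ (K*(2*((K:ℝ)+1)*((1+C)*γ)*(K) + 2*K*γ + γ))*‖h‖ := by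
      have hiden : wq - w = (v - vt) + (vt - ut) + (-d) := by
        rw [hwq_def, hw_def, hu_eq]; abel
      have t1 : ‖v - vt‖ ≤ 2*((K:ℝ)+1)*((1+C)*γ)*(K*‖h‖) := by
        rw [norm_sub_rev]
        refine hvtv.trans ?_
        exact mul_le_mul_of_nonneg_left hvn (by positivity)
      have t2 : ‖vt - ut‖ ≤ 2*(K*(γ*‖h‖)) := by rw [norm_sub_rev]; exact hutvt
      have t3 : ‖-d‖ ≤ γ*‖h‖ := by rw [norm_neg]; exact hd
      have hwqw : ‖wq - w‖ ≤ (2*((K:ℝ)+1)*((1+C)*γ)*(K) + 2*K*γ + γ)*‖h‖ := by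
        rw [hiden]
        calc ‖(v - vt) + (vt - ut) + (-d)‖ ≤ ‖(v - vt) + (vt - ut)‖ + ‖-d‖ := norm_add_le _ _
          _ ≤ ‖v - vt‖ + ‖vt - ut‖ + ‖-d‖ := by
              have h9 := norm_add_le (v - vt) (vt - ut); linarith
          _ ≤ 2*((K:ℝ)+1)*((1+C)*γ)*(K*‖h‖) + 2*(K*(γ*‖h‖)) + γ*‖h‖ := by linarith
          _ = (2*((K:ℝ)+1)*((1+C)*γ)*(K) + 2*K*γ + γ)*‖h‖ := by ring
      calc ‖R wq - R w‖ = ‖R (wq - w)‖ := by rw [← map_sub]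
        _ ≤ ‖R‖*‖wq - w‖ := R.le_opNorm _
        _ ≤ K*((2*((K:ℝ)+1)*((1+C)*γ)*(K) + 2*K*γ + γ)*‖h‖) :=
            mul_le_mul hRn hwqw (norm_nonneg _) hK0.le
        _ = (K*(2*((K:ℝ)+1)*((1+C)*γ)*(K) + 2*K*γ + γ))*‖h‖ := by ring
    have A5 : ‖S' ut - S v‖ ≤ (K*(2*K*γ) + (((K*(2*((K:ℝ)+1)*(1+C)+4) + 2)*γ)+2*γ)*K)*‖h‖ := by
      have e1 : S' ut - S v = S' (ut - vt) + (S' vt - S v) := by rw [map_sub]; abel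
      have b1 : ‖S' (ut - vt)‖ ≤ K*(2*(K*(γ*‖h‖))) := by
        calc ‖S' (ut - vt)‖ ≤ ‖S'‖*‖ut - vt‖ := S'.le_opNorm _
          _ ≤ K*(2*(K*(γ*‖h‖))) := mul_le_mul hSn' hutvt (norm_nonneg _) hK0.le
      obtain ⟨a, ha1, ha2, ha3⟩ := hT4a' vt hvtfix
      have c1 : (∑ i, |a i|) ≤ 2*C*‖v‖ := by
        refine ha1.trans ?_
        calc (C:ℝ)*‖vt‖ ≤ C*(2*‖v‖) := mul_le_mul_of_nonneg_left hvtn' (by positivity)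
          _ = 2*C*‖v‖ := by ring
      have c2 : ‖v - ∑ i, a i • xs i‖ ≤ (2*((K:ℝ)+1)*(1+C) + 2)*γ*‖v‖ := by
        have hdc : v - ∑ i, a i • xs i = (v - vt) + (vt - ∑ i, a i • xs i) :=
          (sub_add_sub_cancel _ _ _).symm
        have hvv : ‖v - vt‖ ≤ 2*((K:ℝ)+1)*((1+C)*γ)*‖v‖ := by
          rw [norm_sub_rev]; exact hvtv
        have hvt2 : γ*‖vt‖ ≤ γ*(2*‖v‖) := mul_le_mul_of_nonneg_left hvtn' hγ.le
        rw [hdc]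
        calc ‖(v - vt) + (vt - ∑ i, a i • xs i)‖ ≤ ‖v - vt‖ + ‖vt - ∑ i, a i • xs i‖ :=
              norm_add_le _ _
          _ ≤ 2*((K:ℝ)+1)*((1+C)*γ)*‖v‖ + γ*(2*‖v‖) := by linarith
          _ = (2*((K:ℝ)+1)*(1+C) + 2)*γ*‖v‖ := by ring
      have hb := hT4b v a hvfix c1 c2
      have b2 : ‖S' vt - S v‖ ≤ ((((K:ℝ)*(2*((K:ℝ)+1)*(1+C)+4) + 2)*γ)+2*γ)*‖v‖ := by
        have hdc : S' vt - S v = (S' vt - ∑ i, a i • ys i) + ((∑ i, a i • ys i) - S v) :=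
          (sub_add_sub_cancel _ _ _).symm
        have hvt2 : γ*‖vt‖ ≤ γ*(2*‖v‖) := mul_le_mul_of_nonneg_left hvtn' hγ.le
        have hbrev : ‖(∑ i, a i • ys i) - S v‖ = ‖S v - ∑ i, a i • ys i‖ := norm_sub_rev _ _
        rw [hdc]
        calc ‖(S' vt - ∑ i, a i • ys i) + ((∑ i, a i • ys i) - S v)‖
            ≤ ‖S' vt - ∑ i, a i • ys i‖ + ‖(∑ i, a i • ys i) - S v‖ := norm_add_le _ _
          _ ≤ γ*(2*‖v‖) + ((K:ℝ)*(2*((K:ℝ)+1)*(1+C)+4) + 2)*γ*‖v‖ := by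
              rw [hbrev]; exact add_le_add (ha3.trans hvt2) hb
          _ = ((((K:ℝ)*(2*((K:ℝ)+1)*(1+C)+4) + 2)*γ)+2*γ)*‖v‖ := by ring
      have hvK : ((((K:ℝ)*(2*((K:ℝ)+1)*(1+C)+4) + 2)*γ)+2*γ)*‖v‖
          ≤ ((((K:ℝ)*(2*((K:ℝ)+1)*(1+C)+4) + 2)*γ)+2*γ)*(K*‖h‖) :=
        mul_le_mul_of_nonneg_left hvn (by positivity)
      rw [e1]
      calc ‖S' (ut - vt) + (S' vt - S v)‖ ≤ ‖S' (ut - vt)‖ + ‖S' vt - S v‖ := norm_add_le _ _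
        _ ≤ K*(2*(K*(γ*‖h‖))) + ((((K:ℝ)*(2*((K:ℝ)+1)*(1+C)+4) + 2)*γ)+2*γ)*(K*‖h‖) := by
            linarith
        _ = (K*(2*K*γ) + (((K*(2*((K:ℝ)+1)*(1+C)+4) + 2)*γ)+2*γ)*K)*‖h‖ := by ring
    have hfe : f (z + -ut) = f (x + wq) := by rw [hq'eq]
    have hkey : f (x+h) - f x - (S v + R w) =
        (f (x+h) - f z) - (f (z + -ut) - f z - S' (-ut)) + (f (x + wq) - f x - R wq)
        + (R wq - R w) + (S' ut - S v) := by
      rw [hfe, map_neg]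
      abel
    have hfinal : ‖f (x+h) - f x - (S v + R w)‖ ≤ ε*‖h‖ := by
      rw [hkey]
      have n1 : ‖(f (x+h) - f z) - (f (z + -ut) - f z - S' (-ut)) + (f (x + wq) - f x - R wq)
          + (R wq - R w) + (S' ut - S v)‖
          ≤ ‖f (x+h) - f z‖ + ‖f (z + -ut) - f z - S' (-ut)‖ + ‖f (x + wq) - f x - R wq‖
          + ‖R wq - R w‖ + ‖S' ut - S v‖ := by
        have k1 := norm_sub_le (f (x+h) - f z) (f (z + -ut) - f z - S' (-ut))
        have k2 := norm_add_le ((f (x+h) - f z) - (f (z + -ut) - f z - S' (-ut)))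
          (f (x + wq) - f x - R wq)
        have k3 := norm_add_le ((f (x+h) - f z) - (f (z + -ut) - f z - S' (-ut))
          + (f (x + wq) - f x - R wq)) (R wq - R w)
        have k4 := norm_add_le ((f (x+h) - f z) - (f (z + -ut) - f z - S' (-ut))
          + (f (x + wq) - f x - R wq) + (R wq - R w)) (S' ut - S v)
        linarith
      have hexp : ((K:ℝ)*γ + γ*(4*K) + γ*(2+4*K)
            + K*(2*((K:ℝ)+1)*((1+C)*γ)*(K) + 2*K*γ + γ)
            + (K*(2*K*γ) + (((K*(2*((K:ℝ)+1)*(1+C)+4) + 2)*γ)+2*γ)*K))*‖h‖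
          = (K*γ)*‖h‖ + (γ*(4*K))*‖h‖ + (γ*(2+4*K))*‖h‖
            + (K*(2*((K:ℝ)+1)*((1+C)*γ)*(K) + 2*K*γ + γ))*‖h‖
            + (K*(2*K*γ) + (((K*(2*((K:ℝ)+1)*(1+C)+4) + 2)*γ)+2*γ)*K)*‖h‖ := by ring
      have hmul := mul_le_mul_of_nonneg_right hΦ2 (norm_nonneg h)
      linarith
    have hdef' : ε * ‖h‖ < ‖f (x + h) - f x - (S v + R w)‖ := by
      have : S (p h) + R (h - p h) = S v + R w := by rw [← hv_def, ← hw_def]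
      rwa [this] at hdef
    exact absurd hdef' (not_lt.mpr hfinal)

lemma littleo_fact {E : Type*} [NormedAddCommGroup E] [NormedSpace ℝ E]
    {g : E → Y} (hg : DifferentiableAt ℝ g 0) {ε : ℝ} (hε : 0 < ε) :
    ∃ δ > 0, ∀ v : E, ‖v‖ ≤ δ → ‖g v - g 0 - (fderiv ℝ g 0) v‖ ≤ ε * ‖v‖ := by
  have h := hg.hasFDerivAt
  rw [hasFDerivAt_iff_isLittleO_nhds_zero] at h
  rw [Asymptotics.isLittleO_iff] at h
  have h2 := h hε
  rw [Metric.eventually_nhds_iff] at h2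
  obtain ⟨δ', hδ', hd⟩ := h2
  refine ⟨δ'/2, by positivity, fun v hv => ?_⟩
  have hvlt : dist v 0 < δ' := by rw [dist_zero_right]; linarith
  have h3 := hd hvlt
  simpa [zero_add] using h3

lemma defect_fact {f : X → Y} {x : X} (hnd : ¬ DifferentiableAt ℝ f x) (T : X →L[ℝ] Y) :
    ∃ c > (0:ℝ), ∀ η > (0:ℝ), ∃ h : X, ‖h‖ ≤ η ∧ c * ‖h‖ < ‖f (x + h) - f x - T h‖ := by
  have hT : ¬ HasFDerivAt f T x := fun h => hnd h.differentiableAt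
  rw [hasFDerivAt_iff_isLittleO_nhds_zero, Asymptotics.isLittleO_iff] at hT
  push_neg at hT
  obtain ⟨c, hc, hfreq⟩ := hT
  refine ⟨c, hc, fun η hη => ?_⟩
  have hev : ∀ᶠ h : X in nhds 0, ‖h‖ ≤ η := by
    have hb := Metric.closedBall_mem_nhds (0:X) hη
    filter_upwards [hb] with a ha
    simpa [dist_zero_right] using ha
  obtain ⟨h, hh1, hh2⟩ := (hfreq.and_eventually hev).exists
  exact ⟨h, hh2, hh1⟩

lemma proj_package (V W : Submodule ℝ X) (hfdV : FiniteDimensional ℝ V)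
    (hWc : IsClosed (W : Set X)) (hVW : IsCompl V W) :
    ∃ (πV : X →L[ℝ] V) (πW : X →L[ℝ] W),
      (∀ u : X, (πV u : X) + (πW u : X) = u) ∧
      (∀ u : X, ∀ hu : u ∈ V, πV u = ⟨u, hu⟩) ∧
      (∀ u : X, ∀ hu : u ∈ W, πW u = ⟨u, hu⟩) ∧
      (∀ u : X, u ∈ W → (πV u : X) = 0) ∧
      (∀ u : X, u ∈ V → (πW u : X) = 0) := by
  haveI := hfdV
  haveI : CompleteSpace W := hWc.completeSpace_coe
  set F : (V × W) →L[ℝ] X := (V.subtypeL).coprod (W.subtypeL) with hF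
  have hFapp : ∀ q : V × W, F q = (q.1 : X) + (q.2 : X) := fun q => rfl
  set e₀ := Submodule.prodEquivOfIsCompl V W hVW with he₀
  have he₀app : ∀ q : V × W, e₀ q = (q.1 : X) + (q.2 : X) := fun q =>
    Submodule.coe_prodEquivOfIsCompl' V W hVW q
  have hFinj : Function.Injective F := by
    intro a b hab
    apply e₀.injective
    rw [he₀app, he₀app, ← hFapp, ← hFapp, hab]
  have hFsurj : Function.Surjective F := by
    intro u
    exact ⟨e₀.symm u, by rw [hFapp, ← he₀app, e₀.apply_symm_apply]⟩
  have hker : LinearMap.ker (F : (V × W) →ₗ[ℝ] X) = ⊥ := LinearMap.ker_eq_bot.mpr hFinj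
  have hrange : LinearMap.range (F : (V × W) →ₗ[ℝ] X) = ⊤ := LinearMap.range_eq_top.mpr hFsurj
  set e := ContinuousLinearEquiv.ofBijective F hker hrange with he
  have heapp : ∀ q : V × W, e q = (q.1 : X) + (q.2 : X) := fun q => rfl
  set πV : X →L[ℝ] V := (ContinuousLinearMap.fst ℝ V W).comp (e.symm : X →L[ℝ] V × W) with hπV
  set πW : X →L[ℝ] W := (ContinuousLinearMap.snd ℝ V W).comp (e.symm : X →L[ℝ] V × W) with hπW
  have hπVapp : ∀ u : X, πV u = (e.symm u).1 := fun u => rfl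
  have hπWapp : ∀ u : X, πW u = (e.symm u).2 := fun u => rfl
  have hsplit : ∀ u : X, (πV u : X) + (πW u : X) = u := by
    intro u
    have h1 := e.apply_symm_apply u
    rw [heapp] at h1
    rw [hπVapp, hπWapp]
    exact h1
  have hsymmV : ∀ u : X, ∀ hu : u ∈ V, e.symm u = (⟨u, hu⟩, 0) := by
    intro u hu
    rw [ContinuousLinearEquiv.symm_apply_eq]
    rw [heapp]
    simp
  have hsymmW : ∀ u : X, ∀ hu : u ∈ W, e.symm u = (0, ⟨u, hu⟩) := by
    intro u hu
    rw [ContinuousLinearEquiv.symm_apply_eq]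
    rw [heapp]
    simp
  refine ⟨πV, πW, hsplit, ?_, ?_, ?_, ?_⟩
  · intro u hu; rw [hπVapp, hsymmV u hu]
  · intro u hu; rw [hπWapp, hsymmW u hu]
  · intro u hu; rw [hπVapp, hsymmW u hu]; rfl
  · intro u hu; rw [hπWapp, hsymmV u hu]; rfl

lemma basis_package (V : Submodule ℝ X) [FiniteDimensional ℝ V] :
    ∃ (b : Fin (Module.finrank ℝ V) → X) (C₀ : ℝ), 0 ≤ C₀ ∧
      (∀ i, b i ∈ V) ∧
      (∀ u : X, u ∈ V → ∃ a : Fin (Module.finrank ℝ V) → ℝ,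
        u = ∑ i, a i • b i ∧ (∑ i, |a i|) ≤ C₀ * ‖u‖) := by
  set bV := Module.finBasis ℝ V with hbV
  set ℓ : Fin (Module.finrank ℝ V) → (V →L[ℝ] ℝ) :=
    fun i => LinearMap.toContinuousLinearMap (bV.coord i) with hℓ
  refine ⟨fun i => (bV i : X), ∑ i, ‖ℓ i‖, by positivity, fun i => (bV i).2, ?_⟩
  intro u hu
  set vv : V := ⟨u, hu⟩ with hvv
  have hnorm : ‖vv‖ = ‖u‖ := rfl
  refine ⟨fun i => bV.repr vv i, ?_, ?_⟩
  · have h1 : (∑ i, bV.repr vv i • bV i : V) = vv := bV.sum_repr vv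
    have h2 := congrArg (Subtype.val) h1
    have h3 : ((∑ i, bV.repr vv i • bV i : V) : X) = ∑ i, bV.repr vv i • (bV i : X) := by
      push_cast
      rfl
    rw [h3] at h2
    exact h2.symm
  · have hterm : ∀ i : Fin (Module.finrank ℝ V), |bV.repr vv i| ≤ ‖ℓ i‖ * ‖vv‖ := by
      intro i
      have h4 := (ℓ i).le_opNorm vv
      have h5 : ℓ i vv = bV.repr vv i := by
        rw [hℓ]
        simp [Module.Basis.coord_apply]
      rw [h5] at h4
      rwa [Real.norm_eq_abs] at h4
    calc (∑ i, |bV.repr vv i|) ≤ ∑ i, ‖ℓ i‖ * ‖vv‖ := Finset.sum_le_sum (fun i _ => hterm i)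
      _ = (∑ i, ‖ℓ i‖) * ‖vv‖ := by rw [Finset.sum_mul]
      _ = (∑ i, ‖ℓ i‖) * ‖u‖ := by rw [hnorm]

lemma params_exist (K C n : ℕ) :
    ∃ N : ℕ,
      (((K:ℝ)+1) * (1+(C:ℝ)) * (1/((N:ℝ)+1)) ≤ 1/2) ∧
      ((K:ℝ)*(1/((N:ℝ)+1)) + (1/((N:ℝ)+1))*(4*K) + (1/((N:ℝ)+1))*(2+4*K)
        + K*(2*((K:ℝ)+1)*((1+C)*(1/((N:ℝ)+1)))*(K) + 2*K*(1/((N:ℝ)+1)) + (1/((N:ℝ)+1)))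
        + (K*(2*K*(1/((N:ℝ)+1)))
          + (((K*(2*((K:ℝ)+1)*(1+C)+4) + 2)*(1/((N:ℝ)+1)))+2*(1/((N:ℝ)+1)))*K)
        ≤ 1/((n:ℝ)+1)) := by
  set Qn : ℕ := K + 4*K + (2+4*K) + K*(2*(K+1)*(1+C)*K + 2*K + 1)
      + (2*K^2 + ((K*(2*(K+1)*(1+C)+4)+2)+2)*K) with hQn
  refine ⟨2*(K+1)*(1+C) + (Qn+1)*(n+1), ?_, ?_⟩
  · have t1 : (0:ℝ) ≤ ((Qn:ℝ)+1)*((n:ℝ)+1) := by positivity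
    have hpos1 : (0:ℝ) < ((2*(K+1)*(1+C) + (Qn+1)*(n+1) : ℕ):ℝ)+1 := by positivity
    rw [mul_one_div, div_le_div_iff₀ hpos1 (by norm_num : (0:ℝ) < 2)]
    push_cast
    nlinarith [t1]
  · have hpos1 : (0:ℝ) < ((2*(K+1)*(1+C) + (Qn+1)*(n+1) : ℕ):ℝ)+1 := by positivity
    have hpos2 : (0:ℝ) < (n:ℝ)+1 := by positivity
    have hEQ : ((K:ℝ)*(1/(((2*(K+1)*(1+C) + (Qn+1)*(n+1) : ℕ):ℝ)+1))
        + (1/(((2*(K+1)*(1+C) + (Qn+1)*(n+1) : ℕ):ℝ)+1))*(4*K)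
        + (1/(((2*(K+1)*(1+C) + (Qn+1)*(n+1) : ℕ):ℝ)+1))*(2+4*K)
        + K*(2*((K:ℝ)+1)*((1+C)*(1/(((2*(K+1)*(1+C) + (Qn+1)*(n+1) : ℕ):ℝ)+1)))*(K)
            + 2*K*(1/(((2*(K+1)*(1+C) + (Qn+1)*(n+1) : ℕ):ℝ)+1))
            + (1/(((2*(K+1)*(1+C) + (Qn+1)*(n+1) : ℕ):ℝ)+1)))
        + (K*(2*K*(1/(((2*(K+1)*(1+C) + (Qn+1)*(n+1) : ℕ):ℝ)+1)))
          + (((K*(2*((K:ℝ)+1)*(1+C)+4) + 2)*(1/(((2*(K+1)*(1+C) + (Qn+1)*(n+1) : ℕ):ℝ)+1)))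
            +2*(1/(((2*(K+1)*(1+C) + (Qn+1)*(n+1) : ℕ):ℝ)+1)))*K))
        = (Qn:ℝ)*(1/(((2*(K+1)*(1+C) + (Qn+1)*(n+1) : ℕ):ℝ)+1)) := by
      rw [hQn]
      push_cast
      ring
    rw [hEQ, mul_one_div, div_le_div_iff₀ hpos1 hpos2]
    have hQN : (Qn:ℝ)*((n:ℝ)+1)
        ≤ ((2*(K+1)*(1+C) + (Qn+1)*(n+1) : ℕ):ℝ)+1 := by
      push_cast
      nlinarith [Nat.cast_nonneg' (α := ℝ) K, Nat.cast_nonneg' (α := ℝ) C,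
        Nat.cast_nonneg' (α := ℝ) Qn, Nat.cast_nonneg' (α := ℝ) n]
    nlinarith [hQN]

lemma capture (f : X → Y) (x : X) (Dx : ℕ → X) (hDx : DenseRange Dx)
    (DY : ℕ → Y) (hDY : DenseRange DY)
    (hLx : ∃ L : ℝ, ∀ᶠ y in nhds x, ‖f y - f x‖ ≤ L * ‖y - x‖)
    (V W : Submodule ℝ X) (hfdV : FiniteDimensional ℝ V) (hWc : IsClosed (W : Set X))
    (hVW : IsCompl V W)
    (hdV : DifferentiableAt ℝ (fun v : V => f (x + (v : X))) (0 : V))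
    (hdW : DifferentiableAt ℝ (fun v : W => f (x + (v : X))) (0 : W))
    (hnd : ¬ DifferentiableAt ℝ f x) :
    ∃ (k K C m N n : ℕ) (xsi ysi : Fin k → ℕ),
      (1 ≤ (K:ℝ)) ∧
      (((K:ℝ)+1) * (1+(C:ℝ)) * (1/((N:ℝ)+1)) ≤ 1/2) ∧
      ((K:ℝ)*(1/((N:ℝ)+1)) + (1/((N:ℝ)+1))*(4*K) + (1/((N:ℝ)+1))*(2+4*K)
        + K*(2*((K:ℝ)+1)*((1+C)*(1/((N:ℝ)+1)))*(K) + 2*K*(1/((N:ℝ)+1)) + (1/((N:ℝ)+1)))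
        + (K*(2*K*(1/((N:ℝ)+1)))
          + (((K*(2*((K:ℝ)+1)*(1+C)+4) + 2)*(1/((N:ℝ)+1)))+2*(1/((N:ℝ)+1)))*K)
        ≤ 1/((n:ℝ)+1)) ∧
      x ∈ Piece f K C (1/((N:ℝ)+1)) (1/((n:ℝ)+1)) (1/((m:ℝ)+1))
        (fun i => Dx (xsi i)) (fun i => DY (ysi i)) := by
  haveI := hfdV
  obtain ⟨πV, πW, hsplit, hfixV, hfixW, hWzero, hVzero⟩ := proj_package V W hfdV hWc hVW
  set p : X →L[ℝ] X := V.subtypeL.comp πV with hp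
  have hpapp : ∀ u, p u = (πV u : X) := fun u => rfl
  have hpV : ∀ u, p u ∈ V := fun u => (πV u).2
  have hfixmem : ∀ u ∈ V, p u = u := by
    intro u hu; rw [hpapp, hfixV u hu]
  have hproj : ∀ u, p (p u) = p u := fun u => hfixmem _ (hpV u)
  have hker0 : ∀ u, p u = 0 → u ∈ W := by
    intro u h0
    have h1 := hsplit u
    rw [← hpapp, h0, zero_add] at h1
    rw [← h1]
    exact (πW u).2
  have hfix_eq : fixSub p = V := by
    ext u
    constructor
    · intro hu
      have : p u = u := hu
      rw [← this]; exact hpV u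
    · intro hu
      exact hfixmem u hu
  have hfdfix : FiniteDimensional ℝ (fixSub p) := by rw [hfix_eq]; exact hfdV
  have hrkfix : Module.finrank ℝ (fixSub p) = Module.finrank ℝ V := by rw [hfix_eq]
  -- derivatives
  set SV := fderiv ℝ (fun v : V => f (x + (v : X))) 0 with hSV
  set RW := fderiv ℝ (fun v : W => f (x + (v : X))) 0 with hRW
  set S : X →L[ℝ] Y := SV.comp πV with hS
  set R : X →L[ℝ] Y := RW.comp πW with hR
  have hSapp : ∀ u, S u = SV (πV u) := fun u => rfl
  have hRapp : ∀ u, R u = RW (πW u) := fun u => rfl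
  -- Lipschitz radius
  obtain ⟨L, hev⟩ := hLx
  rw [Metric.eventually_nhds_iff] at hev
  obtain ⟨r, hr, hball⟩ := hev
  -- defect
  set T : X →L[ℝ] Y := S.comp p + R.comp (ContinuousLinearMap.id ℝ X - p) with hT
  have hTapp : ∀ h : X, T h = S (p h) + R (h - p h) := by
    intro h
    rw [hT]
    simp [ContinuousLinearMap.sub_apply]
  obtain ⟨ε₀, hε₀, hdef⟩ := defect_fact hnd T
  obtain ⟨n, hn⟩ := exists_nat_one_div_lt hε₀
  -- K
  obtain ⟨K, hKmax⟩ := exists_nat_ge (max (max (max ‖p‖ ‖S‖) ‖R‖) (max L 1))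
  have hK1 : 1 ≤ (K:ℝ) :=
    le_trans (le_trans (le_max_right L 1) (le_max_right _ _)) hKmax
  have hpn : ‖p‖ ≤ (K:ℝ) :=
    le_trans (le_trans (le_trans (le_max_left _ _) (le_max_left _ _)) (le_max_left _ _)) hKmax
  have hSn : ‖S‖ ≤ (K:ℝ) :=
    le_trans (le_trans (le_trans (le_max_right _ _) (le_max_left _ _)) (le_max_left _ _)) hKmax
  have hRn : ‖R‖ ≤ (K:ℝ) :=
    le_trans (le_trans (le_max_right _ _) (le_max_left _ _)) hKmax
  have hLK : L ≤ (K:ℝ) :=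
    le_trans (le_trans (le_max_left L 1) (le_max_right _ _)) hKmax
  -- basis
  obtain ⟨b, C₀, hC₀, hbmem, hbrep⟩ := basis_package V
  obtain ⟨C, hCge⟩ := exists_nat_ge C₀
  -- N and γ
  obtain ⟨N, hΦ1γ, hΦ2γ⟩ := params_exist K C n
  set γ : ℝ := 1/((N:ℝ)+1) with hγdef
  have hγpos : 0 < γ := by rw [hγdef]; positivity
  -- moduli and m
  obtain ⟨δ₁, hδ₁, hmodV⟩ := littleo_fact hdV hγpos
  obtain ⟨δ₂, hδ₂, hmodW⟩ := littleo_fact hdW hγpos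
  have hminpos : 0 < min (min δ₁ δ₂) (r/2) := by positivity
  obtain ⟨m, hm⟩ := exists_nat_one_div_lt hminpos
  set δm : ℝ := 1/((m:ℝ)+1) with hδmdef
  have hδmpos : 0 < δm := by rw [hδmdef]; positivity
  have hδm1 : δm ≤ δ₁ := le_trans hm.le (le_trans (min_le_left _ _) (min_le_left _ _))
  have hδm2 : δm ≤ δ₂ := le_trans hm.le (le_trans (min_le_left _ _) (min_le_right _ _))
  have hδmr : δm < r := lt_of_le_of_lt (le_trans hm.le (min_le_right _ _)) (by linarith)
  -- tuples
  have hη'pos : 0 < γ/((C:ℝ)+1) := by positivity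
  have hdivfact : ∀ t : ℝ, 0 ≤ t → (2*(C:ℝ)*t) * (γ/((C:ℝ)+1)) ≤ 2*γ*t := by
    intro t ht
    have hCpos : (0:ℝ) < (C:ℝ)+1 := by positivity
    have hkey : 2*(C:ℝ)*t*γ ≤ 2*γ*t*((C:ℝ)+1) := by
      nlinarith [mul_nonneg hγpos.le ht, (Nat.cast_nonneg C : (0:ℝ) ≤ (C:ℝ))]
    rw [div_eq_mul_inv]
    calc 2*(C:ℝ)*t*(γ*((C:ℝ)+1)⁻¹) = (2*(C:ℝ)*t*γ)*((C:ℝ)+1)⁻¹ := by ring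
      _ ≤ (2*γ*t*((C:ℝ)+1))*((C:ℝ)+1)⁻¹ := mul_le_mul_of_nonneg_right hkey (by positivity)
      _ = 2*γ*t := by field_simp
  have hxs := fun i : Fin (Module.finrank ℝ V) => hDx.exists_dist_lt (b i) hη'pos
  choose xsi hxsi using hxs
  have hys := fun i : Fin (Module.finrank ℝ V) =>
    hDY.exists_dist_lt (SV ⟨b i, hbmem i⟩) hη'pos
  choose ysi hysi using hys
  have hxsb : ∀ i, ‖b i - Dx (xsi i)‖ ≤ γ/((C:ℝ)+1) := by
    intro i
    have h9 := hxsi i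
    rw [dist_eq_norm] at h9
    exact h9.le
  have hysb : ∀ i, ‖SV ⟨b i, hbmem i⟩ - DY (ysi i)‖ ≤ γ/((C:ℝ)+1) := by
    intro i
    have h9 := hysi i
    rw [dist_eq_norm] at h9
    exact h9.le
  refine ⟨Module.finrank ℝ V, K, C, m, N, n, xsi, ysi, hK1, hΦ1γ, hΦ2γ, ?_⟩
  refine ⟨p, S, R, hproj, ⟨hfdfix, hrkfix⟩, hpn, hSn, hRn, ?_, ?_, ?_, ?_, ?_, ?_, ?_⟩
  · -- Lipschitz
    intro y hy
    have h1 : dist y x < r := by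
      rw [dist_eq_norm]
      exact lt_of_le_of_lt hy hδmr
    have h2 := hball h1
    calc ‖f y - f x‖ ≤ L * ‖y - x‖ := h2
      _ ≤ K * ‖y - x‖ := mul_le_mul_of_nonneg_right hLK (norm_nonneg _)
  · -- PV
    intro u hu hun
    have hcoe : ((πV u : X)) = u := by rw [← hpapp]; exact hu
    have hnv : ‖πV u‖ = ‖u‖ := by rw [show ‖πV u‖ = ‖(πV u : X)‖ from rfl, hcoe]
    have h5 := hmodV (πV u) (by rw [hnv]; exact le_trans hun hδm1)
    simp only [ZeroMemClass.coe_zero, add_zero] at h5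
    rw [hcoe, hnv] at h5
    exact h5
  · -- PW
    intro u hu hun
    have huW : u ∈ W := hker0 u hu
    have hcoe : ((πW u : X)) = u := by rw [hfixW u huW]
    have hnv : ‖πW u‖ = ‖u‖ := by rw [show ‖πW u‖ = ‖(πW u : X)‖ from rfl, hcoe]
    have h5 := hmodW (πW u) (by rw [hnv]; exact le_trans hun hδm2)
    simp only [ZeroMemClass.coe_zero, add_zero] at h5
    rw [hcoe, hnv] at h5
    exact h5
  · -- T4a
    intro u hu
    have huV : u ∈ V := by rw [← hu]; exact hpV u
    obtain ⟨a, harep, habd⟩ := hbrep u huV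
    have hCu : C₀ * ‖u‖ ≤ (C:ℝ) * ‖u‖ := mul_le_mul_of_nonneg_right hCge (norm_nonneg u)
    refine ⟨a, habd.trans hCu, ?_, ?_⟩
    · have h1 : u - ∑ i, a i • (Dx (xsi i)) = ∑ i, a i • (b i - Dx (xsi i)) := by
        conv_lhs => rw [harep]
        rw [← Finset.sum_sub_distrib]
        exact Finset.sum_congr rfl (fun i _ => (smul_sub _ _ _).symm)
      rw [h1]
      calc ‖∑ i, a i • (b i - Dx (xsi i))‖ ≤ ∑ i, ‖a i • (b i - Dx (xsi i))‖ :=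
            norm_sum_le _ _
        _ ≤ ∑ i, |a i| * (γ/((C:ℝ)+1)) := by
            refine Finset.sum_le_sum (fun i _ => ?_)
            rw [norm_smul, Real.norm_eq_abs]
            exact mul_le_mul_of_nonneg_left (hxsb i) (abs_nonneg _)
        _ = (∑ i, |a i|) * (γ/((C:ℝ)+1)) := by rw [← Finset.sum_mul]
        _ ≤ (((C:ℝ)+1) * ‖u‖) * (γ/((C:ℝ)+1)) := by
            refine mul_le_mul_of_nonneg_right ?_ hη'pos.le
            refine le_trans (habd.trans hCu) ?_
            nlinarith [norm_nonneg u]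
        _ = γ * ‖u‖ := by field_simp
    · have hvvsum : (⟨u, huV⟩ : V) = ∑ i, a i • (⟨b i, hbmem i⟩ : V) := by
        apply Subtype.ext
        push_cast
        exact harep
      have hSu : S u = ∑ i, a i • SV ⟨b i, hbmem i⟩ := by
        rw [hSapp, hfixV u huV, hvvsum, map_sum]
        exact Finset.sum_congr rfl (fun i _ => map_smul _ _ _)
      have h1 : S u - ∑ i, a i • (DY (ysi i))
          = ∑ i, a i • (SV ⟨b i, hbmem i⟩ - DY (ysi i)) := by
        rw [hSu, ← Finset.sum_sub_distrib]
        exact Finset.sum_congr rfl (fun i _ => (smul_sub _ _ _).symm)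
      rw [h1]
      calc ‖∑ i, a i • (SV ⟨b i, hbmem i⟩ - DY (ysi i))‖
          ≤ ∑ i, ‖a i • (SV ⟨b i, hbmem i⟩ - DY (ysi i))‖ := norm_sum_le _ _
        _ ≤ ∑ i, |a i| * (γ/((C:ℝ)+1)) := by
            refine Finset.sum_le_sum (fun i _ => ?_)
            rw [norm_smul, Real.norm_eq_abs]
            exact mul_le_mul_of_nonneg_left (hysb i) (abs_nonneg _)
        _ = (∑ i, |a i|) * (γ/((C:ℝ)+1)) := by rw [← Finset.sum_mul]
        _ ≤ (((C:ℝ)+1) * ‖u‖) * (γ/((C:ℝ)+1)) := by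
            refine mul_le_mul_of_nonneg_right ?_ hη'pos.le
            refine le_trans (habd.trans hCu) ?_
            nlinarith [norm_nonneg u]
        _ = γ * ‖u‖ := by field_simp
  · -- T4c
    intro a
    set ub : X := ∑ i, a i • b i with hub
    have hubV : ub ∈ V := Submodule.sum_mem _ (fun i _ => Submodule.smul_mem _ _ (hbmem i))
    refine ⟨ub, hfixmem ub hubV, ?_⟩
    have h1 : (∑ i, a i • (Dx (xsi i))) - ub = ∑ i, a i • (Dx (xsi i) - b i) := by
      rw [hub, ← Finset.sum_sub_distrib]
      exact Finset.sum_congr rfl (fun i _ => (smul_sub _ _ _).symm)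
    rw [h1]
    calc ‖∑ i, a i • (Dx (xsi i) - b i)‖ ≤ ∑ i, ‖a i • (Dx (xsi i) - b i)‖ := norm_sum_le _ _
      _ ≤ ∑ i, |a i| * γ := by
          refine Finset.sum_le_sum (fun i _ => ?_)
          rw [norm_smul, Real.norm_eq_abs]
          refine mul_le_mul_of_nonneg_left ?_ (abs_nonneg _)
          rw [norm_sub_rev]
          refine (hxsb i).trans ?_
          exact div_le_self hγpos.le (by nlinarith [(Nat.cast_nonneg C : (0:ℝ) ≤ (C:ℝ))])
      _ = γ * ∑ i, |a i| := by rw [← Finset.sum_mul, mul_comm]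
  · -- T4b
    intro u a hu hsum hclose
    have huV : u ∈ V := by rw [← hu]; exact hpV u
    set ub : X := ∑ i, a i • b i with hub
    have hubV : ub ∈ V := Submodule.sum_mem _ (fun i _ => Submodule.smul_mem _ _ (hbmem i))
    have hvbsum : (⟨ub, hubV⟩ : V) = ∑ i, a i • (⟨b i, hbmem i⟩ : V) := by
      apply Subtype.ext
      push_cast
      rfl
    have hSub : S ub = ∑ i, a i • SV ⟨b i, hbmem i⟩ := by
      rw [hSapp, hfixV ub hubV, hvbsum, map_sum]
      exact Finset.sum_congr rfl (fun i _ => map_smul _ _ _)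
    have hiden : S u - ∑ i, a i • (DY (ysi i))
        = S (u - ub) + (S ub - ∑ i, a i • (DY (ysi i))) := by
      rw [map_sub]; abel
    have hsumabs : (0:ℝ) ≤ ∑ i, |a i| := Finset.sum_nonneg (fun i _ => abs_nonneg _)
    have hb1 : ‖S (u - ub)‖ ≤ (K:ℝ) * ((2*((K:ℝ)+1)*(1+C) + 2) * γ * ‖u‖ + 2*γ*‖u‖) := by
      have hxu : ‖(∑ i, a i • (Dx (xsi i))) - ub‖ ≤ 2*γ*‖u‖ := by
        have h1 : (∑ i, a i • (Dx (xsi i))) - ub = ∑ i, a i • (Dx (xsi i) - b i) := by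
          rw [hub, ← Finset.sum_sub_distrib]
          exact Finset.sum_congr rfl (fun i _ => (smul_sub _ _ _).symm)
        rw [h1]
        calc ‖∑ i, a i • (Dx (xsi i) - b i)‖ ≤ ∑ i, ‖a i • (Dx (xsi i) - b i)‖ :=
              norm_sum_le _ _
          _ ≤ ∑ i, |a i| * (γ/((C:ℝ)+1)) := by
              refine Finset.sum_le_sum (fun i _ => ?_)
              rw [norm_smul, Real.norm_eq_abs]
              refine mul_le_mul_of_nonneg_left ?_ (abs_nonneg _)
              rw [norm_sub_rev]
              exact hxsb i
          _ = (∑ i, |a i|) * (γ/((C:ℝ)+1)) := by rw [← Finset.sum_mul]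
          _ ≤ (2*(C:ℝ)*‖u‖) * (γ/((C:ℝ)+1)) := mul_le_mul_of_nonneg_right hsum hη'pos.le
          _ ≤ 2*γ*‖u‖ := hdivfact ‖u‖ (norm_nonneg u)
      have huub : ‖u - ub‖ ≤ (2*((K:ℝ)+1)*(1+C) + 2) * γ * ‖u‖ + 2*γ*‖u‖ := by
        have hdec : u - ub = (u - ∑ i, a i • (Dx (xsi i)))
            + ((∑ i, a i • (Dx (xsi i))) - ub) := (sub_add_sub_cancel _ _ _).symm
        rw [hdec]
        calc ‖(u - ∑ i, a i • (Dx (xsi i))) + ((∑ i, a i • (Dx (xsi i))) - ub)‖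
            ≤ ‖u - ∑ i, a i • (Dx (xsi i))‖ + ‖(∑ i, a i • (Dx (xsi i))) - ub‖ :=
              norm_add_le _ _
          _ ≤ (2*((K:ℝ)+1)*(1+C) + 2) * γ * ‖u‖ + 2*γ*‖u‖ := add_le_add hclose hxu
      calc ‖S (u - ub)‖ ≤ ‖S‖ * ‖u - ub‖ := S.le_opNorm _
        _ ≤ (K:ℝ) * ((2*((K:ℝ)+1)*(1+C) + 2) * γ * ‖u‖ + 2*γ*‖u‖) := by
            refine mul_le_mul hSn huub (norm_nonneg _) ?_
            exact le_trans zero_le_one hK1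
    have hb2 : ‖S ub - ∑ i, a i • (DY (ysi i))‖ ≤ 2*γ*‖u‖ := by
      have h1 : S ub - ∑ i, a i • (DY (ysi i))
          = ∑ i, a i • (SV ⟨b i, hbmem i⟩ - DY (ysi i)) := by
        rw [hSub, ← Finset.sum_sub_distrib]
        exact Finset.sum_congr rfl (fun i _ => (smul_sub _ _ _).symm)
      rw [h1]
      calc ‖∑ i, a i • (SV ⟨b i, hbmem i⟩ - DY (ysi i))‖
          ≤ ∑ i, ‖a i • (SV ⟨b i, hbmem i⟩ - DY (ysi i))‖ := norm_sum_le _ _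
        _ ≤ ∑ i, |a i| * (γ/((C:ℝ)+1)) := by
            refine Finset.sum_le_sum (fun i _ => ?_)
            rw [norm_smul, Real.norm_eq_abs]
            exact mul_le_mul_of_nonneg_left (hysb i) (abs_nonneg _)
        _ = (∑ i, |a i|) * (γ/((C:ℝ)+1)) := by rw [← Finset.sum_mul]
        _ ≤ (2*(C:ℝ)*‖u‖) * (γ/((C:ℝ)+1)) := mul_le_mul_of_nonneg_right hsum hη'pos.le
        _ ≤ 2*γ*‖u‖ := hdivfact ‖u‖ (norm_nonneg u)
    rw [hiden]
    calc ‖S (u - ub) + (S ub - ∑ i, a i • (DY (ysi i)))‖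
        ≤ ‖S (u - ub)‖ + ‖S ub - ∑ i, a i • (DY (ysi i))‖ := norm_add_le _ _
      _ ≤ (K:ℝ) * ((2*((K:ℝ)+1)*(1+C) + 2) * γ * ‖u‖ + 2*γ*‖u‖) + 2*γ*‖u‖ := add_le_add hb1 hb2
      _ = (((K:ℝ)*(2*((K:ℝ)+1)*(1+C)+4) + 2)*γ) * ‖u‖ := by ring
  · -- B5
    intro η hη
    obtain ⟨h, hh1, hh2⟩ := hdef η hη
    rw [hTapp] at hh2
    refine ⟨h, hh1, ?_⟩
    have h9 : (1/((n:ℝ)+1)) * ‖h‖ ≤ ε₀ * ‖h‖ :=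
      mul_le_mul_of_nonneg_right hn.le (norm_nonneg _)
    exact lt_of_le_of_lt h9 hh2

theorem sigmaPorous_exceptional_set_finiteDim_and_complement
    [TopologicalSpace.SeparableSpace X] [TopologicalSpace.SeparableSpace Y]
    (G : Set X) (hG : IsOpen G) (f : X → Y) :
    ∃ A : Set X, A ⊆ G ∧ SigmaPorous A ∧
      ∀ x ∈ G \ A,
        (LipschitzAtPt f x ∧
         ∃ V W : Submodule ℝ X, FiniteDimensional ℝ V ∧ IsClosed (W : Set X) ∧
           IsCompl V W ∧ FrechetDiffAlong f V x ∧ FrechetDiffAlong f W x) →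
        DifferentiableAt ℝ f x := by
  haveI : Nonempty X := ⟨0⟩
  haveI : Nonempty Y := ⟨0⟩
  obtain ⟨Dx, hDx⟩ := TopologicalSpace.exists_dense_seq X
  obtain ⟨DY, hDY⟩ := TopologicalSpace.exists_dense_seq Y
  classical
  set F : (Σ _ : ℕ × ℕ × ℕ × ℕ × ℕ, Σ k : ℕ, (Fin k → ℕ) × (Fin k → ℕ)) → Set X := fun idx =>
    {x | ((1 ≤ ((idx.1.1:ℕ):ℝ)) ∧
          ((((idx.1.1:ℕ):ℝ)+1) * (1+((idx.1.2.1:ℕ):ℝ)) * (1/(((idx.1.2.2.2.1:ℕ):ℝ)+1)) ≤ 1/2) ∧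
          (((idx.1.1:ℕ):ℝ)*(1/(((idx.1.2.2.2.1:ℕ):ℝ)+1))
            + (1/(((idx.1.2.2.2.1:ℕ):ℝ)+1))*(4*(idx.1.1:ℕ))
            + (1/(((idx.1.2.2.2.1:ℕ):ℝ)+1))*(2+4*(idx.1.1:ℕ))
            + (idx.1.1:ℕ)*(2*(((idx.1.1:ℕ):ℝ)+1)*((1+(idx.1.2.1:ℕ))*(1/(((idx.1.2.2.2.1:ℕ):ℝ)+1)))*((idx.1.1:ℕ))
              + 2*(idx.1.1:ℕ)*(1/(((idx.1.2.2.2.1:ℕ):ℝ)+1)) + (1/(((idx.1.2.2.2.1:ℕ):ℝ)+1)))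
            + ((idx.1.1:ℕ)*(2*(idx.1.1:ℕ)*(1/(((idx.1.2.2.2.1:ℕ):ℝ)+1)))
              + ((((idx.1.1:ℕ)*(2*(((idx.1.1:ℕ):ℝ)+1)*(1+(idx.1.2.1:ℕ))+4) + 2)*(1/(((idx.1.2.2.2.1:ℕ):ℝ)+1)))
                +2*(1/(((idx.1.2.2.2.1:ℕ):ℝ)+1)))*(idx.1.1:ℕ))
            ≤ 1/(((idx.1.2.2.2.2:ℕ):ℝ)+1))) ∧
         x ∈ Piece f idx.1.1 idx.1.2.1 (1/(((idx.1.2.2.2.1:ℕ):ℝ)+1)) (1/(((idx.1.2.2.2.2:ℕ):ℝ)+1))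
           (1/(((idx.1.2.2.1:ℕ):ℝ)+1))
           (fun i => Dx (idx.2.2.1 i)) (fun i => DY (idx.2.2.2 i)) ∩ G} with hF
  have hFsubG : ∀ idx, F idx ⊆ G := by
    intro idx y hy
    exact hy.2.2
  have hFsubP : ∀ idx, F idx ⊆ Piece f idx.1.1 idx.1.2.1 (1/(((idx.1.2.2.2.1:ℕ):ℝ)+1))
      (1/(((idx.1.2.2.2.2:ℕ):ℝ)+1)) (1/(((idx.1.2.2.1:ℕ):ℝ)+1))
      (fun i => Dx (idx.2.2.1 i)) (fun i => DY (idx.2.2.2 i)) := by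
    intro idx y hy
    exact hy.2.1
  have hFporous : ∀ idx, Porous (F idx) := by
    intro idx x hx
    obtain ⟨⟨hK1, hΦ1, hΦ2⟩, hxP, _⟩ := hx
    have hγpos : (0:ℝ) < 1/(((idx.1.2.2.2.1:ℕ):ℝ)+1) := by positivity
    have hγ1 : (1:ℝ)/(((idx.1.2.2.2.1:ℕ):ℝ)+1) ≤ 1 := by
      rw [div_le_one (by positivity)]
      nlinarith [(Nat.cast_nonneg (idx.1.2.2.2.1:ℕ) : (0:ℝ) ≤ ((idx.1.2.2.2.1:ℕ):ℝ))]
    have hpp := piece_porous f idx.1.1 idx.1.2.1 (1/(((idx.1.2.2.2.1:ℕ):ℝ)+1))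
      (1/(((idx.1.2.2.2.2:ℕ):ℝ)+1)) (1/(((idx.1.2.2.1:ℕ):ℝ)+1))
      (fun i => Dx (idx.2.2.1 i)) (fun i => DY (idx.2.2.2 i))
      hK1 hγpos hγ1 (by positivity) (by positivity) hΦ1 hΦ2
    obtain ⟨c, hc, hball⟩ := hpp x hxP
    refine ⟨c, hc, fun δ hδ => ?_⟩
    obtain ⟨t, ht1, ht2, ht3⟩ := hball δ hδ
    refine ⟨t, ht1, ht2, ?_⟩
    rw [Set.eq_empty_iff_forall_notMem] at ht3 ⊢
    intro y hy
    exact ht3 y ⟨hy.1, hFsubP idx hy.2⟩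
  obtain ⟨g, hg⟩ := exists_surjective_nat
    (Σ _ : ℕ × ℕ × ℕ × ℕ × ℕ, Σ k : ℕ, (Fin k → ℕ) × (Fin k → ℕ))
  refine ⟨⋃ j, F (g j), ?_, ⟨fun j => F (g j), fun j => hFporous (g j), rfl⟩, ?_⟩
  · intro y hy
    rw [Set.mem_iUnion] at hy
    obtain ⟨j, hj⟩ := hy
    exact hFsubG (g j) hj
  · rintro x hx ⟨hLip, V, W, hfdV, hWc, hVW, hdV, hdW⟩
    by_contra hnd
    obtain ⟨k, K, C, m, N, n, xsi, ysi, hK1, hΦ1, hΦ2, hmem⟩ :=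
      capture f x Dx hDx DY hDY hLip V W hfdV hWc hVW hdV hdW hnd
    have hxF : x ∈ F ⟨(K, C, m, N, n), k, xsi, ysi⟩ := ⟨⟨hK1, hΦ1, hΦ2⟩, hmem, hx.1⟩
    obtain ⟨j, hj⟩ := hg ⟨(K, C, m, N, n), k, xsi, ysi⟩
    have hxA : x ∈ ⋃ j, F (g j) := Set.mem_iUnion.mpr ⟨j, by rw [hj]; exact hxF⟩
    exact hx.2 hxA
end
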